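/- arXiv:1005.4897 — 6 statements merged into one kernel-verified Lean document; each statement's English description precedes it below -/
import Mathlib

section
/- Let G be a finite group and let f : G → {−1, 1} (values in ℝ) satisfy Σ_{x∈G} f(x) = 0. Suppose d is a positive natural number such that every nontrivial complex irreducible finite-dimensional representation of G has dimension at least d. Then the number of pairs (x, y) ∈ G × G with f(x·y) = f(x)·f(y) is at most (1/2)·(1 + 1/√d)·|G|², i.e., the probability over uniformly and independently chosen x, y ∈ G that f(xy) = f(x)f(y) is at most (1/2)(1 + 1/√d). -/
open scoped BigOperators

namespace ParityAux

variable {G : Type} [Group G] [Fintype G]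

/-- Convolution operator `T h x = ∑ y, f (x y⁻¹) * h y`. -/
noncomputable def Tmap (f : G → ℝ) : EuclideanSpace ℂ G →ₗ[ℂ] EuclideanSpace ℂ G where
  toFun h := WithLp.toLp 2 (fun x => ∑ y : G, (f (x * y⁻¹) : ℂ) * h y)
  map_add' h₁ h₂ := PiLp.ext fun x => by
    simp [mul_add, Finset.sum_add_distrib]
  map_smul' c h := PiLp.ext fun x => by
    simp [Finset.mul_sum]
    exact Finset.sum_congr rfl fun y _ => by ring

/-- Adjoint of `Tmap`: `S h y = ∑ x, f (x y⁻¹) * h x`. -/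
noncomputable def Smap (f : G → ℝ) : EuclideanSpace ℂ G →ₗ[ℂ] EuclideanSpace ℂ G where
  toFun h := WithLp.toLp 2 (fun y => ∑ x : G, (f (x * y⁻¹) : ℂ) * h x)
  map_add' h₁ h₂ := PiLp.ext fun y => by
    simp [mul_add, Finset.sum_add_distrib]
  map_smul' c h := PiLp.ext fun y => by
    simp [Finset.mul_sum]
    exact Finset.sum_congr rfl fun x _ => by ring

/-- Right regular representation. -/
noncomputable def Rrep : Representation ℂ G (EuclideanSpace ℂ G) where
  toFun g := { toFun := fun h => WithLp.toLp 2 (fun x => h (x * g))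
               map_add' := fun h₁ h₂ => rfl
               map_smul' := fun c h => rfl }
  map_one' := by ext h x : 3; exact congrArg h (mul_one x)
  map_mul' g₁ g₂ := by ext h x : 3; exact congrArg h (mul_assoc x g₁ g₂).symm



lemma Tmap_apply (f : G → ℝ) (h : EuclideanSpace ℂ G) (x : G) :
    Tmap f h x = ∑ y : G, (f (x * y⁻¹) : ℂ) * h y := rfl

lemma Smap_apply (f : G → ℝ) (h : EuclideanSpace ℂ G) (y : G) :
    Smap f h y = ∑ x : G, (f (x * y⁻¹) : ℂ) * h x := rfl

lemma Rrep_apply (g : G) (h : EuclideanSpace ℂ G) (x : G) :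
    Rrep g h x = h (x * g) := rfl

lemma inner_Smap (f : G → ℝ) (u w : EuclideanSpace ℂ G) :
    (inner ℂ (Smap f u) w : ℂ) = inner ℂ u (Tmap f w) := by
  simp only [PiLp.inner_apply, RCLike.inner_apply', Smap_apply, Tmap_apply, map_sum, map_mul,
    Complex.conj_ofReal, Finset.sum_mul, Finset.mul_sum]
  rw [Finset.sum_comm]
  exact Finset.sum_congr rfl fun x _ => Finset.sum_congr rfl fun y _ => by ring

noncomputable def Bmap (f : G → ℝ) : EuclideanSpace ℂ G →ₗ[ℂ] EuclideanSpace ℂ G :=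
  (Smap f).comp (Tmap f)

lemma inner_Bmap (f : G → ℝ) (u w : EuclideanSpace ℂ G) :
    (inner ℂ (Bmap f u) w : ℂ) = inner ℂ (Tmap f u) (Tmap f w) := inner_Smap f (Tmap f u) w

lemma inner_Bmap' (f : G → ℝ) (u w : EuclideanSpace ℂ G) :
    (inner ℂ u (Bmap f w) : ℂ) = inner ℂ (Tmap f u) (Tmap f w) := by
  rw [← inner_conj_symm]
  rw [show (inner ℂ (Bmap f w) u : ℂ) = inner ℂ (Tmap f w) (Tmap f u) from inner_Smap f _ u]
  exact inner_conj_symm _ _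

lemma Bmap_isSymmetric (f : G → ℝ) : (Bmap f).IsSymmetric := fun u w => by
  rw [inner_Bmap, inner_Bmap']

lemma Tmap_Rrep (f : G → ℝ) (g : G) (h : EuclideanSpace ℂ G) :
    Tmap f (Rrep g h) = Rrep g (Tmap f h) := by
  ext x
  show ∑ y : G, (f (x * y⁻¹) : ℂ) * h (y * g) = ∑ z : G, (f (x * g * z⁻¹) : ℂ) * h z
  refine Fintype.sum_equiv (Equiv.mulRight g) _ _ fun y => ?_
  have h2 : x * g * (y * g)⁻¹ = x * y⁻¹ := by group
  rw [show ((Equiv.mulRight g) y) = y * g from rfl, h2]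

lemma Smap_Rrep (f : G → ℝ) (g : G) (h : EuclideanSpace ℂ G) :
    Smap f (Rrep g h) = Rrep g (Smap f h) := by
  ext y
  show ∑ x : G, (f (x * y⁻¹) : ℂ) * h (x * g) = ∑ z : G, (f (z * (y * g)⁻¹) : ℂ) * h z
  refine Fintype.sum_equiv (Equiv.mulRight g) _ _ fun x => ?_
  have h2 : x * g * (y * g)⁻¹ = x * y⁻¹ := by group
  rw [show ((Equiv.mulRight g) x) = x * g from rfl]
  rw [show x * g * (y * g)⁻¹ = x * y⁻¹ from by group]

lemma Bmap_Rrep (f : G → ℝ) (g : G) (h : EuclideanSpace ℂ G) :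
    Bmap f (Rrep g h) = Rrep g (Bmap f h) := by
  show Smap f (Tmap f (Rrep g h)) = Rrep g (Smap f (Tmap f h))
  rw [Tmap_Rrep, Smap_Rrep]

lemma row_sum (f : G → ℝ) (hsum : ∑ x : G, f x = 0) (x : G) :
    ∑ y : G, (f (x * y⁻¹) : ℂ) = 0 := by
  have e : G ≃ G := (Equiv.inv G).trans (Equiv.mulLeft x)
  have := Equiv.sum_comp ((Equiv.inv G).trans (Equiv.mulLeft x)) (fun g : G => (f g : ℂ))
  simp only [Equiv.trans_apply, Equiv.inv_apply, Equiv.coe_mulLeft] at this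
  rw [this]
  rw [← Complex.ofReal_sum]
  simp [hsum]

lemma sum_Smap (f : G → ℝ) (hsum : ∑ x : G, f x = 0) (h : EuclideanSpace ℂ G) :
    ∑ y : G, Smap f h y = 0 := by
  simp only [Smap_apply]
  rw [Finset.sum_comm]
  have : ∀ x : G, ∑ y : G, (f (x * y⁻¹) : ℂ) * h x = 0 := by
    intro x
    rw [← Finset.sum_mul, row_sum f hsum x, zero_mul]
  simp [this]



set_option linter.unusedSectionVars false

lemma normsq_eq {ι : Type} [Fintype ι] (w : EuclideanSpace ℂ ι) :
    ‖w‖ ^ 2 = ∑ i, ‖w i‖ ^ 2 := by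
  rw [EuclideanSpace.norm_eq, Real.sq_sqrt]
  positivity

lemma Tmap_norm_sq_bound (f : G → ℝ) (hf : ∀ x, f x = 1 ∨ f x = -1)
    (hsum : ∑ x : G, f x = 0) (d : ℕ) (hd : 0 < d)
    (hrep : ∀ (V : Type) [AddCommGroup V] [Module ℂ V] [FiniteDimensional ℂ V]
      (ρ : Representation ℂ G V),
      (∀ U : Submodule ℂ V, (∀ g : G, ∀ v ∈ U, ρ g v ∈ U) → U = ⊥ ∨ U = ⊤) →
      (∃ g : G, ρ g ≠ 1) → d ≤ Module.finrank ℂ V)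
    (v : EuclideanSpace ℂ G) :
    ‖Tmap f v‖ ^ 2 ≤ ((Fintype.card G : ℝ) ^ 2 / d) * ‖v‖ ^ 2 := by
  classical
  set n := Fintype.card G with hn_def
  have hn : Module.finrank ℂ (EuclideanSpace ℂ G) = n := finrank_euclideanSpace
  have hB := Bmap_isSymmetric f
  set μ := hB.eigenvalues hn with hmu_def
  set e := hB.eigenvectorBasis hn with he_def
  have hnpos : 0 < n := Fintype.card_pos
  -- Parseval-type identities
  have repr_inner : ∀ u w : EuclideanSpace ℂ G,
      (inner ℂ u w : ℂ) = ∑ i, (starRingEnd ℂ) (e.repr u i) * e.repr w i := by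
    intro u w
    rw [← e.repr.inner_map_map u w, PiLp.inner_apply]
    simp [RCLike.inner_apply', mul_comm]
  have hBv_repr : ∀ (w : EuclideanSpace ℂ G) (i : Fin n),
      e.repr (Bmap f w) i = (μ i : ℂ) * e.repr w i := fun w i =>
    hB.eigenvectorBasis_apply_self_apply hn w i
  have key : ∀ w : EuclideanSpace ℂ G, ‖Tmap f w‖ ^ 2 = ∑ i, μ i * ‖e.repr w i‖ ^ 2 := by
    intro w
    have h1 : (‖Tmap f w‖ ^ 2 : ℝ) = RCLike.re (inner ℂ (Tmap f w) (Tmap f w) : ℂ) :=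
      (inner_self_eq_norm_sq _).symm
    rw [h1, ← inner_Bmap' f w w, repr_inner, map_sum]
    refine Finset.sum_congr rfl fun i _ => ?_
    rw [hBv_repr]
    have hz : (starRingEnd ℂ) (e.repr w i) * ((μ i : ℂ) * e.repr w i)
        = (((μ i * ‖e.repr w i‖ ^ 2 : ℝ)) : ℂ) := by
      rw [mul_left_comm, mul_comm ((starRingEnd ℂ) (e.repr w i)), Complex.mul_conj,
        ← Complex.ofReal_mul, Complex.sq_norm]
    rw [hz]
    rw [RCLike.re_to_complex]
    exact Complex.ofReal_re _
  have keyn : ∀ w : EuclideanSpace ℂ G, ‖w‖ ^ 2 = ∑ i, ‖e.repr w i‖ ^ 2 := by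
    intro w
    rw [← e.repr.norm_map w]
    exact normsq_eq _
  have hmu : ∀ i, μ i = ‖Tmap f (e i)‖ ^ 2 := by
    intro i
    rw [key (e i), e.repr_self i]
    have h2 : ∀ j, μ j * ‖(EuclideanSpace.single i (1:ℂ)) j‖ ^ 2
        = if j = i then μ j else 0 := fun j => by
      rw [EuclideanSpace.single_apply]
      by_cases h : j = i <;> simp [h]
    rw [Finset.sum_congr rfl fun j _ => h2 j, Finset.sum_ite_eq' Finset.univ i μ]
    simp
  have hmunn : ∀ i, 0 ≤ μ i := fun i => (hmu i) ▸ sq_nonneg _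
  have hfsq : ∀ z : G, f z ^ 2 = 1 := fun z => by rcases hf z with h | h <;> rw [h] <;> norm_num
  -- trace identity
  have htrace : ∑ i, μ i = (n : ℝ) ^ 2 := by
    have h1 : ∀ i, μ i = ∑ x : G, ‖Tmap f (e i) x‖ ^ 2 := fun i => by
      rw [hmu i, normsq_eq]
    rw [Finset.sum_congr rfl fun i _ => h1 i, Finset.sum_comm]
    have hrow : ∀ x : G, ∑ i, ‖Tmap f (e i) x‖ ^ 2 = (n : ℝ) := by
      intro x
      set r : EuclideanSpace ℂ G := WithLp.toLp 2 (fun y => (f (x * y⁻¹) : ℂ)) with hr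
      have hTx : ∀ h : EuclideanSpace ℂ G, Tmap f h x = inner ℂ r h := by
        intro h
        rw [Tmap_apply, PiLp.inner_apply]
        refine Finset.sum_congr rfl fun y _ => ?_
        simp [hr, RCLike.inner_apply', Complex.conj_ofReal, mul_comm]
      have h2 : ∀ i, ‖Tmap f (e i) x‖ = ‖e.repr r i‖ := by
        intro i
        rw [hTx, e.repr_apply_apply, norm_inner_symm]
      calc ∑ i, ‖Tmap f (e i) x‖ ^ 2 = ∑ i, ‖e.repr r i‖ ^ 2 :=
            Finset.sum_congr rfl fun i _ => by rw [h2 i]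
        _ = ‖r‖ ^ 2 := (keyn r).symm
        _ = ∑ y : G, ‖r y‖ ^ 2 := normsq_eq r
        _ = ∑ y : G, (1 : ℝ) := Finset.sum_congr rfl fun y _ => by
            rw [show r y = ((f (x * y⁻¹) : ℝ) : ℂ) from rfl, Complex.norm_real,
              Real.norm_eq_abs, sq_abs, hfsq]
        _ = (n : ℝ) := by
            rw [Finset.sum_const, Finset.card_univ, ← hn_def, nsmul_eq_mul, mul_one]
    rw [Finset.sum_congr rfl fun x _ => hrow x, Finset.sum_const, Finset.card_univ, ← hn_def,
      nsmul_eq_mul]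
    ring
  -- maximal eigenvalue
  obtain ⟨i0, -, hmax'⟩ := Finset.exists_max_image (Finset.univ : Finset (Fin n)) μ
    ⟨⟨0, hnpos⟩, Finset.mem_univ _⟩
  have hmax : ∀ i, μ i ≤ μ i0 := fun i => hmax' i (Finset.mem_univ i)
  set lam := μ i0 with hlam_def
  have hbound1 : ‖Tmap f v‖ ^ 2 ≤ lam * ‖v‖ ^ 2 := by
    rw [key v, keyn v, Finset.mul_sum]
    exact Finset.sum_le_sum fun i _ =>
      mul_le_mul_of_nonneg_right (hmax i) (sq_nonneg _)
  have hlamnn : 0 ≤ lam := hmunn i0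
  rcases eq_or_lt_of_le hlamnn with heq | hpos
  · have h0 : ‖Tmap f v‖ ^ 2 ≤ 0 := le_trans hbound1 (by rw [← heq, zero_mul])
    refine le_trans h0 ?_
    positivity
  · -- lam > 0 : representation-theoretic multiplicity bound
    set E := Module.End.eigenspace (Bmap f) (lam : ℂ) with hE_def
    have hmem_iff : ∀ w : EuclideanSpace ℂ G, w ∈ E ↔ Bmap f w = (lam : ℂ) • w := fun w =>
      Module.End.mem_eigenspace_iff
    have hei0 : e i0 ∈ E := (hmem_iff _).mpr (hB.apply_eigenvectorBasis hn i0)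
    have hEinv : ∀ g : G, ∀ w ∈ E, Rrep g w ∈ E := by
      intro g w hw
      rw [hmem_iff] at hw ⊢
      rw [Bmap_Rrep, hw, map_smul]
    have hEzero : ∀ w ∈ E, ∑ x : G, w x = 0 := by
      intro w hw
      rw [hmem_iff] at hw
      have h1 : ∑ x : G, (Bmap f w) x = 0 := sum_Smap f hsum (Tmap f w)
      rw [hw] at h1
      have h2 : ∑ x : G, ((lam : ℂ) • w) x = (lam : ℂ) * ∑ x : G, w x := by
        rw [Finset.mul_sum]
        exact Finset.sum_congr rfl fun x _ => rfl
      rw [h2] at h1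
      have hln : (lam : ℂ) ≠ 0 := by
        simp only [ne_eq, Complex.ofReal_eq_zero]
        exact ne_of_gt hpos
      exact (mul_eq_zero.mp h1).resolve_left hln
    have hEne : E ≠ ⊥ := by
      intro hbot
      have h1 := hei0
      rw [hbot, Submodule.mem_bot] at h1
      have h2 := e.toBasis.ne_zero i0
      rw [OrthonormalBasis.coe_toBasis] at h2
      exact h2 h1
    -- pick a minimal invariant nonzero subspace of E
    set Pred : ℕ → Prop := fun k => ∃ W : Submodule ℂ (EuclideanSpace ℂ G),
      (W ≠ ⊥ ∧ W ≤ E ∧ ∀ g : G, ∀ w ∈ W, Rrep g w ∈ W) ∧ Module.finrank ℂ W = k with hPred_def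
    have hPex : ∃ k, Pred k := ⟨Module.finrank ℂ E, E, ⟨hEne, le_refl E, hEinv⟩, rfl⟩
    obtain ⟨W, ⟨hWne, hWle, hWinv⟩, hWrank⟩ := Nat.find_spec hPex
    have hWmin : ∀ W' : Submodule ℂ (EuclideanSpace ℂ G), W' ≠ ⊥ → W' ≤ E →
        (∀ g : G, ∀ w ∈ W', Rrep g w ∈ W') →
        Module.finrank ℂ W ≤ Module.finrank ℂ W' := by
      intro W' h1 h2 h3
      rw [hWrank]
      exact Nat.find_min' hPex ⟨W', ⟨h1, h2, h3⟩, rfl⟩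
    -- the representation of G on W
    set ρ : Representation ℂ G W :=
      { toFun := fun g => (Rrep g).restrict (fun w hw => hWinv g w hw)
        map_one' := by
          refine LinearMap.ext fun w => Subtype.ext ?_
          show Rrep (1 : G) (w : EuclideanSpace ℂ G) = (w : EuclideanSpace ℂ G)
          rw [map_one]
          rfl
        map_mul' := fun g₁ g₂ => by
          refine LinearMap.ext fun w => Subtype.ext ?_
          show Rrep (g₁ * g₂) (w : EuclideanSpace ℂ G)
            = Rrep g₁ (Rrep g₂ (w : EuclideanSpace ℂ G))
          rw [map_mul]
          rfl } with hrho_def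
    have hrho_coe : ∀ (g : G) (w : W), (ρ g w : EuclideanSpace ℂ G) = Rrep g (w : EuclideanSpace ℂ G) :=
      fun g w => rfl
    have hd2 : d ≤ Module.finrank ℂ W := by
      refine hrep W ρ ?_ ?_
      · intro U hU
        by_cases hUbot : U = ⊥
        · exact Or.inl hUbot
        · right
          set W' := U.map W.subtype with hW'_def
          have hW'le : W' ≤ W := Submodule.map_subtype_le W U
          have hW'ne : W' ≠ ⊥ := by
            obtain ⟨u, huU, hune⟩ := (Submodule.ne_bot_iff U).mp hUbot
            rw [Submodule.ne_bot_iff]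
            refine ⟨(u : EuclideanSpace ℂ G), Submodule.mem_map_of_mem huU, ?_⟩
            intro hco
            exact hune (by exact_mod_cast hco)
          have hW'inv : ∀ g : G, ∀ w ∈ W', Rrep g w ∈ W' := by
            intro g w hw
            rw [hW'_def, Submodule.mem_map] at hw
            obtain ⟨u', hu', rfl⟩ := hw
            have heq : Rrep g (W.subtype u') = W.subtype (ρ g u') := rfl
            rw [heq]
            exact Submodule.mem_map_of_mem (hU g u' hu')
          have hmin := hWmin W' hW'ne (le_trans hW'le hWle) hW'inv
          have hW'W : W' = W := Submodule.eq_of_le_of_finrank_le hW'le hmin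
          have hfinal : U.map W.subtype = (⊤ : Submodule ℂ W).map W.subtype := by
            rw [Submodule.map_subtype_top]
            exact hW'W
          exact Submodule.map_injective_of_injective (Submodule.injective_subtype W) hfinal
      · by_contra hcon
        push_neg at hcon
        obtain ⟨w, hwW, hwne⟩ := (Submodule.ne_bot_iff W).mp hWne
        have hconst : ∀ g : G, w g = w 1 := by
          intro g
          have h1 : ρ g ⟨w, hwW⟩ = ⟨w, hwW⟩ := by rw [hcon g]; rfl
          have h2 : Rrep g w = w := by
            have := congrArg (Subtype.val) h1
            rwa [hrho_coe] at this
          have h3 : Rrep g w 1 = w 1 := congrArg (fun v : EuclideanSpace ℂ G => v 1) h2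
          rw [Rrep_apply, one_mul] at h3
          exact h3
        have hzero : ∑ x : G, w x = 0 := hEzero w (hWle hwW)
        rw [Finset.sum_congr rfl fun x _ => hconst x, Finset.sum_const, Finset.card_univ,
          ← hn_def, nsmul_eq_mul] at hzero
        have hnne : ((n : ℂ)) ≠ 0 := by
          simp only [ne_eq, Nat.cast_eq_zero]
          omega
        have hw1 : w 1 = 0 := (mul_eq_zero.mp hzero).resolve_left hnne
        refine hwne ?_
        ext x
        rw [hconst x, hw1]
        rfl
    have hdE : d ≤ Module.finrank ℂ E := le_trans hd2 (Submodule.finrank_mono hWle)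
    -- multiplicity of lam among eigenvalues is at least finrank E
    set Sset := Finset.univ.filter (fun i => μ i = lam) with hSset_def
    have hspan : E ≤ Submodule.span ℂ
        ((Sset.image (fun i => e i) : Finset (EuclideanSpace ℂ G)) : Set (EuclideanSpace ℂ G)) := by
      intro w hw
      have hcoef : ∀ i, μ i ≠ lam → e.repr w i = 0 := by
        intro i hi
        have h1 : (inner ℂ (e i) (Bmap f w) : ℂ) = (lam : ℂ) * inner ℂ (e i) w := by
          rw [(hmem_iff w).mp hw, inner_smul_right]
        have h2 : (inner ℂ (e i) (Bmap f w) : ℂ) = (μ i : ℂ) * inner ℂ (e i) w := by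
          rw [← hB (e i) w, hB.apply_eigenvectorBasis hn i, inner_smul_left, RCLike.conj_ofReal]
          rfl
        have h3 : ((μ i : ℂ) - (lam : ℂ)) * inner ℂ (e i) w = 0 := by
          rw [sub_mul, ← h2, h1, sub_self]
        have h4 : ((μ i : ℂ) - (lam : ℂ)) ≠ 0 := by
          rw [sub_ne_zero]
          exact_mod_cast hi
        have h5 := (mul_eq_zero.mp h3).resolve_left h4
        rw [e.repr_apply_apply]
        exact h5
      rw [← e.sum_repr w]
      refine Submodule.sum_mem _ fun i _ => ?_
      by_cases hi : μ i = lam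
      · refine Submodule.smul_mem _ _ (Submodule.subset_span ?_)
        rw [Finset.coe_image]
        exact Set.mem_image_of_mem _ (by
          rw [Finset.mem_coe, hSset_def, Finset.mem_filter]
          exact ⟨Finset.mem_univ i, hi⟩)
      · rw [hcoef i hi, zero_smul]
        exact Submodule.zero_mem _
    have hcard : Module.finrank ℂ E ≤ Sset.card := by
      have h1 : Module.finrank ℂ E ≤ Module.finrank ℂ (Submodule.span ℂ
          ((Sset.image (fun i => e i) : Finset (EuclideanSpace ℂ G)) : Set (EuclideanSpace ℂ G))) :=
        Submodule.finrank_mono hspan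
      have h2 := finrank_span_finset_le_card (R := ℂ) (Sset.image (fun i => e i))
      exact le_trans h1 (le_trans h2 Finset.card_image_le)
    have hlam_le : lam * d ≤ (n : ℝ) ^ 2 := by
      have h1 : (d : ℝ) ≤ (Sset.card : ℝ) := by exact_mod_cast le_trans hdE hcard
      have h2 : lam * (Sset.card : ℝ) ≤ ∑ i, μ i := by
        have h3 : lam * (Sset.card : ℝ) = ∑ i ∈ Sset, μ i := by
          rw [Finset.sum_congr rfl (fun i hi => (Finset.mem_filter.mp hi).2),
            Finset.sum_const, nsmul_eq_mul, mul_comm]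
        rw [h3]
        exact Finset.sum_le_sum_of_subset_of_nonneg (Finset.subset_univ _)
          (fun i _ _ => hmunn i)
      calc lam * d ≤ lam * (Sset.card : ℝ) := mul_le_mul_of_nonneg_left h1 hlamnn
        _ ≤ ∑ i, μ i := h2
        _ = (n : ℝ) ^ 2 := htrace
    have hdpos : (0 : ℝ) < d := by exact_mod_cast hd
    have hlam_le' : lam ≤ (n : ℝ) ^ 2 / d := by
      rw [le_div_iff₀ hdpos]
      exact hlam_le
    calc ‖Tmap f v‖ ^ 2 ≤ lam * ‖v‖ ^ 2 := hbound1
      _ ≤ ((n : ℝ) ^ 2 / d) * ‖v‖ ^ 2 := mul_le_mul_of_nonneg_right hlam_le' (sq_nonneg _)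



end ParityAux

open ParityAux in
theorem parity_upper_bound {G : Type} [Group G] [Fintype G] (f : G → ℝ)
    (hf : ∀ x, f x = 1 ∨ f x = -1) (hsum : ∑ x : G, f x = 0)
    (d : ℕ) (hd : 0 < d)
    (hrep : ∀ (V : Type) [AddCommGroup V] [Module ℂ V] [FiniteDimensional ℂ V]
      (ρ : Representation ℂ G V),
      (∀ U : Submodule ℂ V, (∀ g : G, ∀ v ∈ U, ρ g v ∈ U) → U = ⊥ ∨ U = ⊤) →
      (∃ g : G, ρ g ≠ 1) → d ≤ Module.finrank ℂ V) :
    (Nat.card {p : G × G // f (p.1 * p.2) = f p.1 * f p.2} : ℝ) ≤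
      (1 / 2) * (1 + 1 / Real.sqrt d) * (Fintype.card G : ℝ) ^ 2 := by
  classical
  have hfsq : ∀ z : G, f z ^ 2 = 1 := fun z => by rcases hf z with h | h <;> rw [h] <;> norm_num
  set n := Fintype.card G with hn_def
  set S : ℝ := ∑ x : G, ∑ y : G, f (x * y) * f x * f y with hS_def
  set Np := (Finset.univ.filter (fun p : G × G => f (p.1 * p.2) = f p.1 * f p.2)).card with hNp_def
  -- counting identity
  have hNat : (Nat.card {p : G × G // f (p.1 * p.2) = f p.1 * f p.2}) = Np := by
    rw [Nat.card_eq_fintype_card, Fintype.card_subtype]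
  have hSprod : S = ∑ p : G × G, f (p.1 * p.2) * f p.1 * f p.2 := by
    rw [hS_def, Fintype.sum_prod_type]
  have hterm1 : ∀ p : G × G, f (p.1 * p.2) = f p.1 * f p.2 →
      f (p.1 * p.2) * f p.1 * f p.2 = 1 := by
    intro p hp
    rw [hp]
    calc f p.1 * f p.2 * f p.1 * f p.2 = f p.1 ^ 2 * f p.2 ^ 2 := by ring
      _ = 1 := by rw [hfsq, hfsq]; norm_num
  have hterm2 : ∀ p : G × G, ¬(f (p.1 * p.2) = f p.1 * f p.2) →
      f (p.1 * p.2) * f p.1 * f p.2 = -1 := by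
    intro p hp
    rcases hf (p.1 * p.2) with h1 | h1 <;> rcases hf p.1 with h2 | h2 <;>
      rcases hf p.2 with h3 | h3 <;> rw [h1, h2, h3] at hp ⊢ <;> norm_num at hp <;> norm_num
  have hcards : Np + (Finset.univ.filter
      (fun p : G × G => ¬(f (p.1 * p.2) = f p.1 * f p.2))).card = n ^ 2 := by
    rw [hNp_def, Finset.card_filter_add_card_filter_not, Finset.card_univ,
      Fintype.card_prod, ← hn_def]
    ring
  have hsum1 : ∑ p ∈ Finset.univ.filter (fun p : G × G => f (p.1 * p.2) = f p.1 * f p.2),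
      (f (p.1 * p.2) * f p.1 * f p.2) = (Np : ℝ) := by
    rw [Finset.sum_congr rfl fun p hp => hterm1 p (Finset.mem_filter.mp hp).2,
      Finset.sum_const, nsmul_eq_mul, mul_one, hNp_def]
  have hsum2 : ∑ p ∈ Finset.univ.filter (fun p : G × G => ¬(f (p.1 * p.2) = f p.1 * f p.2)),
      (f (p.1 * p.2) * f p.1 * f p.2)
      = -((Finset.univ.filter (fun p : G × G => ¬(f (p.1 * p.2) = f p.1 * f p.2))).card : ℝ) := by
    rw [Finset.sum_congr rfl fun p hp => hterm2 p (Finset.mem_filter.mp hp).2,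
      Finset.sum_const, nsmul_eq_mul, mul_neg_one]
  have hcards' : (Np : ℝ) + ((Finset.univ.filter
      (fun p : G × G => ¬(f (p.1 * p.2) = f p.1 * f p.2))).card : ℝ) = (n : ℝ) ^ 2 := by
    exact_mod_cast congrArg (fun k : ℕ => (k : ℝ)) hcards
  have hSval : S = 2 * (Np : ℝ) - (n : ℝ) ^ 2 := by
    rw [hSprod, ← Finset.sum_filter_add_sum_filter_not Finset.univ
      (fun p : G × G => f (p.1 * p.2) = f p.1 * f p.2), hsum1, hsum2]
    linarith [hcards']
  -- bound on S
  set v : EuclideanSpace ℂ G := WithLp.toLp 2 (fun x => (f x : ℂ)) with hv_def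
  set a : G → ℝ := fun z => ∑ y : G, f (z * y⁻¹) * f y with ha_def
  have hTv : ∀ z : G, Tmap f v z = ((a z : ℝ) : ℂ) := by
    intro z
    rw [Tmap_apply, ha_def]
    push_cast
    rfl
  have hSa : S = ∑ z : G, a z * f z := by
    rw [hS_def, Finset.sum_comm]
    have hinner : ∀ y : G, ∑ x : G, f (x * y) * f x * f y
        = ∑ z : G, f z * f (z * y⁻¹) * f y := by
      intro y
      refine Fintype.sum_equiv (Equiv.mulRight y) _ _ fun x => ?_
      rw [show (Equiv.mulRight y) x = x * y from rfl,
        show x * y * y⁻¹ = x from by group]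
    rw [Finset.sum_congr rfl fun y _ => hinner y, Finset.sum_comm]
    refine Finset.sum_congr rfl fun z _ => ?_
    rw [ha_def, Finset.sum_mul]
    exact Finset.sum_congr rfl fun y _ => by ring
  have hCS : S ^ 2 ≤ (∑ z : G, a z ^ 2) * (∑ z : G, f z ^ 2) := by
    rw [hSa]
    exact Finset.sum_mul_sq_le_sq_mul_sq Finset.univ a f
  have hsumfsq : ∑ z : G, f z ^ 2 = (n : ℝ) := by
    rw [Finset.sum_congr rfl fun z _ => hfsq z, Finset.sum_const, Finset.card_univ, ← hn_def,
      nsmul_eq_mul, mul_one]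
  have haTv : ∑ z : G, a z ^ 2 = ‖Tmap f v‖ ^ 2 := by
    rw [normsq_eq]
    exact Finset.sum_congr rfl fun z _ => by
      rw [hTv z, Complex.norm_real, Real.norm_eq_abs, sq_abs]
  have hvnorm : ‖v‖ ^ 2 = (n : ℝ) := by
    rw [normsq_eq]
    have : ∀ x : G, ‖v x‖ ^ 2 = 1 := fun x => by
      rw [show v x = ((f x : ℝ) : ℂ) from rfl, Complex.norm_real, Real.norm_eq_abs, sq_abs, hfsq]
    rw [Finset.sum_congr rfl fun x _ => this x, Finset.sum_const, Finset.card_univ, ← hn_def,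
      nsmul_eq_mul, mul_one]
  have hmain := Tmap_norm_sq_bound f hf hsum d hd hrep v
  rw [hvnorm] at hmain
  have hdpos : (0 : ℝ) < d := by exact_mod_cast hd
  have hS2 : S ^ 2 ≤ (n : ℝ) ^ 4 / d := by
    calc S ^ 2 ≤ (∑ z : G, a z ^ 2) * (∑ z : G, f z ^ 2) := hCS
      _ = ‖Tmap f v‖ ^ 2 * (n : ℝ) := by rw [haTv, hsumfsq]
      _ ≤ ((n : ℝ) ^ 2 / d * (n : ℝ)) * (n : ℝ) := by
          have hnn : (0 : ℝ) ≤ (n : ℝ) := Nat.cast_nonneg n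
          exact mul_le_mul_of_nonneg_right hmain hnn
      _ = (n : ℝ) ^ 4 / d := by ring
  have hsd : 0 < Real.sqrt d := Real.sqrt_pos.mpr hdpos
  have hSb : S ≤ (n : ℝ) ^ 2 / Real.sqrt d := by
    have h2 : S ≤ |S| := le_abs_self S
    have h3 : |S| = Real.sqrt (S ^ 2) := (Real.sqrt_sq_eq_abs S).symm
    have h4 : Real.sqrt (S ^ 2) ≤ Real.sqrt ((n : ℝ) ^ 4 / d) := Real.sqrt_le_sqrt hS2
    have h5 : Real.sqrt ((n : ℝ) ^ 4 / d) = (n : ℝ) ^ 2 / Real.sqrt d := by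
      rw [Real.sqrt_div (by positivity : (0:ℝ) ≤ (n : ℝ) ^ 4) (d : ℝ),
        show ((n : ℝ) ^ 4) = ((n : ℝ) ^ 2) ^ 2 from by ring, Real.sqrt_sq (by positivity)]
    linarith
  -- conclude
  have hNp_real : (Np : ℝ) = ((n : ℝ) ^ 2 + S) / 2 := by linarith [hSval]
  have hrhs : (1 / 2) * (1 + 1 / Real.sqrt d) * (n : ℝ) ^ 2
      = ((n : ℝ) ^ 2 + (n : ℝ) ^ 2 / Real.sqrt d) / 2 := by
    field_simp
  have hgoal : ((Nat.card {p : G × G // f (p.1 * p.2) = f p.1 * f p.2} : ℕ) : ℝ) = (Np : ℝ) := by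
    exact_mod_cast congrArg (fun k : ℕ => (k : ℝ)) hNat
  rw [hgoal, hNp_real, hrhs]
  have hmono : (n : ℝ) ^ 2 / Real.sqrt d ≥ S := hSb
  linarith
end

section
/- Let G be a finite group with a subgroup H admitting a surjective (hence nontrivial) group homomorphism φ : H → {−1, 1}. Then there exists a function f : G → {−1, 1} with Σ_{x∈G} f(x) = 0 such that the number of pairs (x, y) ∈ G × G with f(x·y) = f(x)·f(y) is at least (1/2)·(1 + (1/2)·(|H|/|G|)·(1 − |N_G(H)|/|G|) + |H|²/|G|²)·|G|², where N_G(H) = {c ∈ G : cHc⁻¹ = H} is the normalizer of H in G. -/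
open scoped BigOperators
open Finset

namespace PLB
open scoped Classical

variable {G : Type} [Group G] [Fintype G]

/-! ### flip machinery -/

section flp
variable {Q : Type} [Fintype Q] [DecidableEq Q]
noncomputable def flp (s : Q) (c : Q → ℤˣ) : Q → ℤˣ := Function.update c s (-(c s))
omit [Fintype Q] in
lemma flp_invol (s : Q) : Function.Involutive (flp s) := by
  intro c; funext t
  by_cases h : t = s <;> simp [flp, Function.update_apply, h]
lemma sum_eq_zero_of_flp (s : Q) (g : (Q → ℤˣ) → ℤ)
    (hg : ∀ c, g (flp s c) = - g c) : ∑ c : Q → ℤˣ, g c = 0 := by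
  have h1 : ∑ c : Q → ℤˣ, g c = ∑ c : Q → ℤˣ, g (flp s c) :=
    (Equiv.sum_comp ((flp_invol s).toPerm _) g).symm
  simp only [hg, Finset.sum_neg_distrib] at h1
  linarith
omit [Fintype Q] in
lemma flp_at (s : Q) (c : Q → ℤˣ) : flp s c s = -(c s) := by simp [flp]
omit [Fintype Q] in
lemma flp_ne (s t : Q) (c : Q → ℤˣ) (h : t ≠ s) : flp s c t = c t := by
  simp [flp, Function.update_apply, h]
end flp

/-! ### units helpers -/

lemma u_aabb (a b : ℤˣ) : a * a * b * b = 1 := by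
  rw [Int.units_mul_self, one_mul, Int.units_mul_self]
lemma u_abab (a b : ℤˣ) : a * b * a * b = 1 := by
  calc a * b * a * b = a * a * b * b := by rw [mul_assoc a b a, mul_comm b a, ← mul_assoc a a b]
  _ = 1 := u_aabb a b
lemma u_baab (b a : ℤˣ) : b * a * a * b = 1 := by
  rw [mul_assoc b a a, Int.units_mul_self, mul_one, Int.units_mul_self]
lemma sq_cast (u : ℤˣ) : ((u : ℤ)) * ((u : ℤ)) = 1 := by
  rw [← Units.val_mul, Int.units_mul_self, Units.val_one]
lemma unit_ite (u v w : ℤˣ) : ((u * v * w : ℤˣ) : ℤ) = (if u = v * w then (1:ℤ) else -1) := by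
  rcases Int.units_eq_one_or u with h1 | h1 <;>
    rcases Int.units_eq_one_or v with h2 | h2 <;>
      rcases Int.units_eq_one_or w with h3 | h3 <;>
        rw [h1, h2, h3] <;> norm_num

/-! ### the `H`-part of an element -/

noncomputable def hp (H : Subgroup G) (x : G) : H :=
  ⟨((QuotientGroup.mk x : G ⧸ H)).out⁻¹ * x, by
    rw [← QuotientGroup.eq]; exact QuotientGroup.out_eq' _⟩

omit [Fintype G] in
lemma mk_eq_mk_one (H : Subgroup G) {y : G} :
    (QuotientGroup.mk y : G ⧸ H) = QuotientGroup.mk 1 ↔ y ∈ H := by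
  rw [QuotientGroup.eq]; simp

omit [Fintype G] in
lemma hp_mul_right (H : Subgroup G) {y : G} (hy : y ∈ H) (x : G) :
    hp H (x * y) = hp H x * ⟨y, hy⟩ := by
  have e1 : (QuotientGroup.mk (x*y) : G ⧸ H) = QuotientGroup.mk x :=
    QuotientGroup.eq.mpr (by simpa [mul_assoc] using H.inv_mem hy)
  apply Subtype.ext
  show ((QuotientGroup.mk (x*y) : G ⧸ H)).out⁻¹ * (x*y)
      = (((QuotientGroup.mk x : G ⧸ H)).out⁻¹ * x) * y
  rw [e1, mul_assoc]

omit [Fintype G] in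
lemma hp_of_mem (H : Subgroup G) {x : G} (hx : x ∈ H) :
    hp H x = hp H 1 * ⟨x, hx⟩ := by
  apply Subtype.ext
  show ((QuotientGroup.mk x : G ⧸ H)).out⁻¹ * x
      = (((QuotientGroup.mk 1 : G ⧸ H)).out⁻¹ * 1) * x
  rw [(mk_eq_mk_one H).mpr hx, mul_one]

omit [Fintype G] in
lemma hp_K (H : Subgroup G) (x z y : G)
    (e1 : (QuotientGroup.mk (x*y) : G ⧸ H) = QuotientGroup.mk y)
    (e2 : (QuotientGroup.mk (z*y) : G ⧸ H) = QuotientGroup.mk y)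
    (e3 : (QuotientGroup.mk (x*z*y) : G ⧸ H) = QuotientGroup.mk y) :
    hp H (x*z*y) = hp H (x*y) * (hp H y)⁻¹ * hp H (z*y) := by
  apply Subtype.ext
  show ((QuotientGroup.mk (x*z*y) : G ⧸ H)).out⁻¹ * (x*z*y)
      = (((QuotientGroup.mk (x*y) : G ⧸ H)).out⁻¹ * (x*y)) *
        (((QuotientGroup.mk y : G ⧸ H)).out⁻¹ * y)⁻¹ *
        (((QuotientGroup.mk (z*y) : G ⧸ H)).out⁻¹ * (z*y))
  rw [e1, e2, e3]
  group

/-! ### the candidate functions and the main quantities -/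

variable (H : Subgroup G) (φ : H →* ℤˣ)

noncomputable def ff (c : (G ⧸ H) → ℤˣ) (x : G) : ℤˣ :=
  c (QuotientGroup.mk x) * c (QuotientGroup.mk 1) * φ (hp H 1) * φ (hp H x)

noncomputable def bet (x y : G) : ℤ :=
  ((φ (hp H 1) * φ (hp H (x * y)) * φ (hp H x) * φ (hp H y) : ℤˣ) : ℤ)

noncomputable def gam (c : (G ⧸ H) → ℤˣ) (x y : G) : ℤ :=
  ((c (QuotientGroup.mk (x * y)) * c (QuotientGroup.mk x) * c (QuotientGroup.mk y) *
    c (QuotientGroup.mk 1) : ℤˣ) : ℤ)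

noncomputable def P (c : (G ⧸ H) → ℤˣ) (x y : G) : ℤ :=
  ((ff H φ c (x * y) * ff H φ c x * ff H φ c y : ℤˣ) : ℤ)

def cond (x y : G) : Prop :=
  y ∈ H ∨ (x ∈ H ∧ (QuotientGroup.mk (x * y) : G ⧸ H) = QuotientGroup.mk y) ∨
    (x * y ∈ H ∧ (QuotientGroup.mk x : G ⧸ H) = QuotientGroup.mk y)

omit [Fintype G] in
lemma P_eq (c : (G ⧸ H) → ℤˣ) (x y : G) : P H φ c x y = gam H c x y * bet H φ x y := by
  have hb := sq_cast (c (QuotientGroup.mk 1))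
  have hr := sq_cast (φ (hp H 1))
  simp only [P, ff, gam, bet, Units.val_mul]
  set a1 := ((c (QuotientGroup.mk (x*y)) : ℤˣ) : ℤ)
  set a2 := ((c (QuotientGroup.mk x) : ℤˣ) : ℤ)
  set a3 := ((c (QuotientGroup.mk y) : ℤˣ) : ℤ)
  set b := ((c (QuotientGroup.mk (1:G)) : ℤˣ) : ℤ)
  set r := ((φ (hp H 1) : ℤˣ) : ℤ)
  set h1 := ((φ (hp H (x*y)) : ℤˣ) : ℤ)
  set h2 := ((φ (hp H x) : ℤˣ) : ℤ)
  set h3 := ((φ (hp H y) : ℤˣ) : ℤ)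
  calc (a1 * b * r * h1) * (a2 * b * r * h2) * (a3 * b * r * h3)
      = ((a1 * a2 * a3 * b) * (r * h1 * h2 * h3)) * ((b * b) * (r * r)) := by ring
    _ = _ := by rw [hb, hr]; ring

omit [Fintype G] in
lemma bet_pm (x y : G) : bet H φ x y = 1 ∨ bet H φ x y = -1 := by
  rcases Int.units_eq_one_or (φ (hp H 1) * φ (hp H (x * y)) * φ (hp H x) * φ (hp H y)) with h | h <;>
    simp [bet, h]

omit [Fintype G] in
lemma bet_one {x y : G} (hy : y ∈ H) : bet H φ x y = 1 := by
  rw [bet, hp_mul_right H hy x, hp_of_mem H hy, map_mul, map_mul]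
  push_cast
  have h1 := sq_cast (φ (hp H 1)); have h2 := sq_cast (φ (hp H x)); have h3 := sq_cast (φ ⟨y, hy⟩)
  linear_combination (((φ (hp H x) : ℤˣ):ℤ) * ((φ (hp H x) : ℤˣ):ℤ) * ((φ ⟨y,hy⟩ : ℤˣ):ℤ) * ((φ ⟨y,hy⟩ : ℤˣ):ℤ)) * h1 +
    (((φ ⟨y,hy⟩ : ℤˣ):ℤ) * ((φ ⟨y,hy⟩ : ℤˣ):ℤ)) * h2 + h3

lemma gam_sum (H : Subgroup G) (x y : G) :
    ∑ c : (G ⧸ H) → ℤˣ, gam H c x y =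
      if cond H x y then (Fintype.card ((G ⧸ H) → ℤˣ) : ℤ) else 0 := by
  by_cases hc : cond H x y
  · rw [if_pos hc]
    have h1 : ∀ c : (G ⧸ H) → ℤˣ, gam H c x y = 1 := by
      intro c
      rcases hc with hy | ⟨hx, he⟩ | ⟨hxy, he⟩
      · have e3 : (QuotientGroup.mk y : G ⧸ H) = QuotientGroup.mk 1 := (mk_eq_mk_one H).mpr hy
        have e1 : (QuotientGroup.mk (x * y) : G ⧸ H) = QuotientGroup.mk x :=
          QuotientGroup.eq.mpr (by simpa [mul_assoc] using H.inv_mem hy)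
        rw [gam, e1, e3, u_aabb, Units.val_one]
      · have e2 : (QuotientGroup.mk x : G ⧸ H) = QuotientGroup.mk 1 := (mk_eq_mk_one H).mpr hx
        rw [gam, he, e2, u_abab, Units.val_one]
      · have e1 : (QuotientGroup.mk (x * y) : G ⧸ H) = QuotientGroup.mk 1 :=
          (mk_eq_mk_one H).mpr hxy
        rw [gam, e1, he, u_baab, Units.val_one]
    simp [h1]
  · rw [if_neg hc]
    rw [cond, not_or, not_or] at hc
    obtain ⟨hy, h2, h3⟩ := hc
    have hp3 : (QuotientGroup.mk y : G ⧸ H) ≠ QuotientGroup.mk 1 :=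
      fun h => hy ((mk_eq_mk_one H).mp h)
    by_cases hx : x ∈ H
    · -- flip at p1 = mk (x*y)
      have e2 : (QuotientGroup.mk x : G ⧸ H) = QuotientGroup.mk 1 := (mk_eq_mk_one H).mpr hx
      have h13 : (QuotientGroup.mk (x*y) : G ⧸ H) ≠ QuotientGroup.mk y := fun h => h2 ⟨hx, h⟩
      have hxyH : x * y ∉ H := fun h => hy (by simpa using H.mul_mem (H.inv_mem hx) h)
      have hp1 : (QuotientGroup.mk (x*y) : G ⧸ H) ≠ QuotientGroup.mk 1 :=
        fun h => hxyH ((mk_eq_mk_one H).mp h)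
      apply sum_eq_zero_of_flp (QuotientGroup.mk (x*y))
      intro c
      rw [gam, gam, flp_at,
        flp_ne _ _ c (by rw [e2]; exact hp1.symm),
        flp_ne _ _ c h13.symm, flp_ne _ _ c hp1.symm]
      push_cast
      ring
    · have hp2 : (QuotientGroup.mk x : G ⧸ H) ≠ QuotientGroup.mk 1 :=
        fun h => hx ((mk_eq_mk_one H).mp h)
      by_cases hxy : x * y ∈ H
      · -- flip at p2 = mk x
        have e1 : (QuotientGroup.mk (x*y) : G ⧸ H) = QuotientGroup.mk 1 :=
          (mk_eq_mk_one H).mpr hxy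
        have h23 : (QuotientGroup.mk x : G ⧸ H) ≠ QuotientGroup.mk y := fun h => h3 ⟨hxy, h⟩
        apply sum_eq_zero_of_flp (QuotientGroup.mk x)
        intro c
        rw [gam, gam, flp_at,
          flp_ne _ _ c (by rw [e1]; exact hp2.symm),
          flp_ne _ _ c h23.symm, flp_ne _ _ c hp2.symm]
        push_cast
        ring
      · have hp1 : (QuotientGroup.mk (x*y) : G ⧸ H) ≠ QuotientGroup.mk 1 :=
          fun h => hxy ((mk_eq_mk_one H).mp h)
        by_cases h12 : (QuotientGroup.mk (x*y) : G ⧸ H) = QuotientGroup.mk x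
        · by_cases h13 : (QuotientGroup.mk (x*y) : G ⧸ H) = QuotientGroup.mk y
          · -- all three equal: flip at p1
            apply sum_eq_zero_of_flp (QuotientGroup.mk (x*y))
            intro c
            rw [gam, gam, ← h12, ← h13, flp_at, flp_ne _ _ c hp1.symm]
            push_cast
            ring
          · -- flip at p3
            apply sum_eq_zero_of_flp (QuotientGroup.mk y)
            intro c
            rw [gam, gam, flp_at,
              flp_ne _ _ c h13,
              flp_ne _ _ c (h12 ▸ h13),
              flp_ne _ _ c hp3.symm]
            push_cast
            ring
        · by_cases h13 : (QuotientGroup.mk (x*y) : G ⧸ H) = QuotientGroup.mk y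
          · -- flip at p2
            apply sum_eq_zero_of_flp (QuotientGroup.mk x)
            intro c
            rw [gam, gam, flp_at,
              flp_ne _ _ c h12,
              flp_ne _ _ c (h13 ▸ h12 : (QuotientGroup.mk y : G ⧸ H) ≠ QuotientGroup.mk x),
              flp_ne _ _ c hp2.symm]
            push_cast
            ring
          · -- all distinct: flip at p1
            apply sum_eq_zero_of_flp (QuotientGroup.mk (x*y))
            intro c
            rw [gam, gam, flp_at,
              flp_ne _ _ c (fun h => h12 h.symm),
              flp_ne _ _ c (fun h => h13 h.symm),
              flp_ne _ _ c hp1.symm]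
            push_cast
            ring

lemma charsum_nonneg (K : Subgroup G) (g : G → ℤ)
    (hval : ∀ x ∈ K, g x = 1 ∨ g x = -1)
    (hmul : ∀ x ∈ K, ∀ z ∈ K, g (x * z) = g x * g z) :
    0 ≤ ∑ x ∈ univ.filter (· ∈ K), g x := by
  by_cases hall : ∀ x ∈ K, g x = 1
  · have : ∑ x ∈ univ.filter (· ∈ K), g x = ∑ x ∈ univ.filter (· ∈ K), (1:ℤ) :=
      Finset.sum_congr rfl (fun x hx => hall x (by simpa using hx))
    rw [this]
    simp
  · push_neg at hall
    obtain ⟨z, hz, hz1⟩ := hall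
    have hzneg : g z = -1 := (hval z hz).resolve_left hz1
    have key : ∑ x ∈ univ.filter (· ∈ K), g x = ∑ x ∈ univ.filter (· ∈ K), g (z * x) := by
      apply Finset.sum_nbij' (fun x => z⁻¹ * x) (fun x => z * x)
      · intro a ha; simp only [mem_filter, mem_univ, true_and] at *
        exact K.mul_mem (K.inv_mem hz) ha
      · intro a ha; simp only [mem_filter, mem_univ, true_and] at *
        exact K.mul_mem hz ha
      · intro a _; simp [mul_assoc]
      · intro a _; simp [← mul_assoc]
      · intro a _; rw [← mul_assoc]; simp
    have key2 : ∑ x ∈ univ.filter (· ∈ K), g (z * x) =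
        - ∑ x ∈ univ.filter (· ∈ K), g x := by
      rw [← Finset.sum_neg_distrib]
      refine Finset.sum_congr rfl (fun x hx => ?_)
      rw [hmul z hz x (by simpa using hx), hzneg]
      ring
    omega



/-- The subgroup governing the middle term. -/
noncomputable def Ksub (y : G) : Subgroup G :=
  H ⊓ Subgroup.comap ((MulAut.conj y⁻¹).toMonoidHom) H

omit [Fintype G] in
lemma mem_Ksub {x y : G} :
    x ∈ Ksub H y ↔ x ∈ H ∧ (QuotientGroup.mk (x * y) : G ⧸ H) = QuotientGroup.mk y := by
  rw [Ksub, Subgroup.mem_inf, Subgroup.mem_comap]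
  constructor
  · rintro ⟨h1, h2⟩
    refine ⟨h1, QuotientGroup.eq.mpr ?_⟩
    have : y⁻¹ * x * y⁻¹⁻¹ ∈ H := h2
    simpa [mul_assoc] using H.inv_mem this
  · rintro ⟨h1, h2⟩
    refine ⟨h1, ?_⟩
    have := QuotientGroup.eq.mp h2
    show y⁻¹ * x * y⁻¹⁻¹ ∈ H
    simpa [mul_assoc] using H.inv_mem this

omit [Fintype G] in
lemma bet_mult {x z y : G} (hx : x ∈ Ksub H y) (hz : z ∈ Ksub H y) :
    bet H φ (x * z) y = bet H φ x y * bet H φ z y := by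
  obtain ⟨hxH, ex⟩ := (mem_Ksub H).mp hx
  obtain ⟨hzH, ez⟩ := (mem_Ksub H).mp hz
  obtain ⟨hxzH, exz⟩ := (mem_Ksub H).mp ((Ksub H y).mul_mem hx hz)
  rw [bet, bet, bet, hp_K H x z y ex ez exz, hp_of_mem H hxzH, hp_of_mem H hxH, hp_of_mem H hzH]
  have hsplit : (⟨x * z, hxzH⟩ : H) = ⟨x, hxH⟩ * ⟨z, hzH⟩ := rfl
  rw [hsplit, map_mul, map_mul, map_mul, map_mul, map_mul, map_inv, map_mul,
    Int.units_inv_eq_self]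
  push_cast
  set R := ((φ (hp H 1) : ℤˣ) : ℤ)
  set A := ((φ (hp H (x*y)) : ℤˣ) : ℤ)
  set B := ((φ (hp H (z*y)) : ℤˣ) : ℤ)
  set X := ((φ (⟨x, hxH⟩ : H) : ℤˣ) : ℤ)
  set Z := ((φ (⟨z, hzH⟩ : H) : ℤˣ) : ℤ)
  set Y := ((φ (hp H y) : ℤˣ) : ℤ)
  have hR : R * R = 1 := sq_cast _
  linear_combination (-(A*B*X*Z*Y*Y*R*R)) * hR

lemma middle_nonneg {y : G} :
    0 ≤ ∑ x : G, (if x ∈ H ∧ (QuotientGroup.mk (x * y) : G ⧸ H) = QuotientGroup.mk y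
      then bet H φ x y else 0) := by
  have e : ∀ x : G, (if x ∈ H ∧ (QuotientGroup.mk (x * y) : G ⧸ H) = QuotientGroup.mk y
      then bet H φ x y else 0) = (if x ∈ Ksub H y then bet H φ x y else 0) := by
    intro x
    by_cases h : x ∈ Ksub H y
    · rw [if_pos h, if_pos ((mem_Ksub H).mp h)]
    · rw [if_neg h, if_neg (fun hh => h ((mem_Ksub H).mpr hh))]
  rw [Finset.sum_congr rfl (fun x _ => e x), ← Finset.sum_filter]
  exact charsum_nonneg (Ksub H y) _ (fun x _ => bet_pm H φ x y)
    (fun x hx z hz => bet_mult H φ hx hz)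

lemma card_filter_subgroup (K : Subgroup G) :
    (univ.filter (· ∈ K)).card = Nat.card K := by
  simp [Nat.card_eq_fintype_card, Fintype.card_subtype]

lemma two_mul_card_le (D H : Subgroup G) (hle : D ≤ H) (hne : D ≠ H) :
    2 * Nat.card D ≤ Nat.card H := by
  obtain ⟨k, hk⟩ := Subgroup.card_dvd_of_le hle
  have hD : 0 < Nat.card D := Nat.card_pos
  match k, hk with
  | 0, hk => have hH : 0 < Nat.card H := Nat.card_pos; omega
  | 1, hk => exact absurd (Subgroup.eq_of_le_of_card_ge hle (by omega)) hne
  | (k+2), hk => nlinarith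
lemma ncard_pos (H : Subgroup G) : 0 < Nat.card H := Nat.card_pos

lemma mem_norm (H : Subgroup G) (x : G) (h : ∀ n ∈ H, x * n * x⁻¹ ∈ H) :
    x ∈ (Subgroup.normalizer (H : Set G)) := Subgroup.mem_normalizer_fintype h

/-- Counting elements outside `H` whose square is in `H`. -/
lemma count_sq (H : Subgroup G) :
    2 * (univ.filter (fun x : G => x ∉ H ∧ x * x ∈ H)).card + 2 * Nat.card H ≤
      Nat.card G + Nat.card (Subgroup.normalizer (H : Set G)) := by
  set N := (Subgroup.normalizer (H : Set G)) with hN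
  set Tf := univ.filter (fun x : G => x ∉ H) with hTf
  set Q' := univ.filter (fun x : G => x ∉ H ∧ x * x ∈ H) with hQ'
  set w : G → ℕ := fun x => if x ∈ N then 2 else 1 with hw
  -- fiberwise decompositions
  have lhs : Q'.card = ∑ q : G ⧸ H, (Q'.filter (fun x => (QuotientGroup.mk x : G ⧸ H) = q)).card :=
    Finset.card_eq_sum_card_fiberwise (by simp)
  have rhs : ∑ q : G ⧸ H, ∑ x ∈ Tf.filter (fun x => (QuotientGroup.mk x : G ⧸ H) = q), w x
      = ∑ x ∈ Tf, w x :=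
    Finset.sum_fiberwise_of_maps_to (by simp) w
  -- the per-coset bound
  have perq : ∀ q : G ⧸ H,
      2 * (Q'.filter (fun x => (QuotientGroup.mk x : G ⧸ H) = q)).card ≤
        ∑ x ∈ Tf.filter (fun x => (QuotientGroup.mk x : G ⧸ H) = q), w x := by
    intro q
    by_cases hF : (Q'.filter (fun x => (QuotientGroup.mk x : G ⧸ H) = q)).Nonempty
    · obtain ⟨x₀, hx₀⟩ := hF
      simp only [hQ', mem_filter, mem_univ, true_and] at hx₀
      obtain ⟨⟨hx₀H, hx₀2⟩, hx₀q⟩ := hx₀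
      have hsubTQ : (Q'.filter (fun x => (QuotientGroup.mk x : G ⧸ H) = q)) ⊆
          (Tf.filter (fun x => (QuotientGroup.mk x : G ⧸ H) = q)) := by
        intro x hx
        simp only [hQ', hTf, mem_filter, mem_univ, true_and] at *
        exact ⟨hx.1.1, hx.2⟩
      by_cases hNx : x₀ ∈ N
      · -- whole coset is in N, weight 2 everywhere
        have hwall : ∀ x ∈ Tf.filter (fun x => (QuotientGroup.mk x : G ⧸ H) = q), w x = 2 := by
          intro x hx
          simp only [hTf, mem_filter, mem_univ, true_and] at hx
          have hmk : (QuotientGroup.mk x₀ : G ⧸ H) = QuotientGroup.mk x := by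
            rw [hx₀q, hx.2]
          have h1 : x₀⁻¹ * x ∈ H := QuotientGroup.eq.mp hmk
          have : x ∈ N := by
            have := N.mul_mem hNx (Subgroup.le_normalizer h1)
            simpa using this
          simp [hw, this]
        rw [Finset.sum_congr rfl hwall, Finset.sum_const, smul_eq_mul]
        have := Finset.card_le_card hsubTQ
        omega
      · -- x₀ outside the normalizer: the fiber has at most half the coset
        set D := H ⊓ Subgroup.comap (MulAut.conj x₀).toMonoidHom H with hD
        have hinj : (Q'.filter (fun x => (QuotientGroup.mk x : G ⧸ H) = q)).card ≤
            (univ.filter (· ∈ D)).card := by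
          apply Finset.card_le_card_of_injOn (fun x => x₀⁻¹ * x)
          · intro x hx
            simp only [Finset.mem_coe, hQ', mem_filter, mem_univ, true_and] at hx
            obtain ⟨⟨hxH, hx2⟩, hxq⟩ := hx
            have hmk : (QuotientGroup.mk x₀ : G ⧸ H) = QuotientGroup.mk x := by rw [hx₀q, hxq]
            have h1 : x₀⁻¹ * x ∈ H := QuotientGroup.eq.mp hmk
            have hconj : x₀ * (x₀⁻¹ * x) * x₀⁻¹ ∈ H := by
              have hrw : x₀ * (x₀⁻¹ * x) * x₀⁻¹ = (x * x) * ((x₀⁻¹ * x)⁻¹ * (x₀ * x₀)⁻¹) := by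
                group
              rw [hrw]
              exact H.mul_mem hx2 (H.mul_mem (H.inv_mem h1) (H.inv_mem hx₀2))
            simp only [Finset.mem_coe, mem_filter, mem_univ, true_and, hD, Subgroup.mem_inf,
              Subgroup.mem_comap]
            exact ⟨h1, hconj⟩
          · intro a _ b _ hab
            exact mul_left_cancel hab
        have hDH : 2 * Nat.card D ≤ Nat.card H := by
          apply two_mul_card_le D H inf_le_left
          intro hDeq
          apply hNx
          apply mem_norm H x₀
          intro n hn
          have : n ∈ D := hDeq ▸ hn
          rw [hD, Subgroup.mem_inf, Subgroup.mem_comap] at this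
          exact this.2
        -- the full coset has `Nat.card H` elements and weight ≥ 1
        have hcoset : Nat.card H ≤ (Tf.filter (fun x => (QuotientGroup.mk x : G ⧸ H) = q)).card := by
          rw [← card_filter_subgroup H]
          apply Finset.card_le_card_of_injOn (fun h => x₀ * h)
          · intro h hh
            simp only [Finset.mem_coe, mem_filter, mem_univ, true_and, hTf] at *
            constructor
            · intro hmem
              have : x₀ ∈ H := by simpa using H.mul_mem hmem (H.inv_mem hh)
              exact hNx (Subgroup.le_normalizer this)
            · rw [← hx₀q]
              symm
              exact QuotientGroup.eq.mpr (by simpa using hh)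
          · intro a _ b _ hab
            exact mul_left_cancel hab
        have hwge : (Tf.filter (fun x => (QuotientGroup.mk x : G ⧸ H) = q)).card ≤
            ∑ x ∈ Tf.filter (fun x => (QuotientGroup.mk x : G ⧸ H) = q), w x := by
          calc (Tf.filter _).card
              = ∑ _x ∈ Tf.filter (fun x => (QuotientGroup.mk x : G ⧸ H) = q), 1 := by
                rw [Finset.sum_const, smul_eq_mul, mul_one]
            _ ≤ _ := Finset.sum_le_sum (fun x _ => by by_cases h : x ∈ N <;> simp [hw, h])
        rw [card_filter_subgroup] at hinj
        omega
    · rw [Finset.not_nonempty_iff_eq_empty.mp hF]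
      simp
  -- put fibers together
  have main : 2 * Q'.card ≤ ∑ x ∈ Tf, w x := by
    rw [lhs, ← rhs, Finset.mul_sum]
    exact Finset.sum_le_sum fun q _ => perq q
  -- compute the total weight
  have c1 : (Tf.filter (· ∈ N)).card + Nat.card H = Nat.card N := by
    have hsplit := Finset.card_filter_add_card_filter_not
      (s := univ.filter (· ∈ N)) (p := (· ∈ H))
    have e1 : (univ.filter (· ∈ N)).filter (· ∈ H) = univ.filter (· ∈ H) := by
      ext x
      simp only [mem_filter, mem_univ, true_and]
      exact ⟨fun h => h.2, fun h => ⟨Subgroup.le_normalizer h, h⟩⟩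
    have e2 : (univ.filter (· ∈ N)).filter (fun x => ¬ x ∈ H) = Tf.filter (· ∈ N) := by
      ext x
      simp only [hTf, mem_filter, mem_univ, true_and]
      tauto
    rw [e1, e2, card_filter_subgroup, card_filter_subgroup] at hsplit
    omega
  have c2 : Nat.card H + Tf.card = Nat.card G := by
    have hsplit := Finset.card_filter_add_card_filter_not
      (s := (univ : Finset G)) (p := (· ∈ H))
    rw [card_filter_subgroup] at hsplit
    have : univ.filter (fun x : G => ¬ x ∈ H) = Tf := rfl
    rw [this, Finset.card_univ, ← Nat.card_eq_fintype_card] at hsplit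
    omega
  have c3 : (Tf.filter (· ∈ N)).card + (Tf.filter (fun x => x ∉ N)).card = Tf.card :=
    Finset.card_filter_add_card_filter_not (s := Tf) (p := (· ∈ N))
  have c4 : ∑ x ∈ Tf, w x = 2 * (Tf.filter (· ∈ N)).card + (Tf.filter (fun x => x ∉ N)).card := by
    rw [show ∑ x ∈ Tf, w x = ∑ x ∈ Tf, (if x ∈ N then 2 else 1) from rfl,
      Finset.sum_ite, Finset.sum_const, Finset.sum_const, smul_eq_mul, smul_eq_mul, mul_one]
    ring
  omega

/-! ### the expectation bound -/

lemma vv_split (x y : G) :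
    (if cond H x y then bet H φ x y else 0) =
      (if y ∈ H then bet H φ x y else
        (if x ∈ H ∧ (QuotientGroup.mk (x*y) : G ⧸ H) = QuotientGroup.mk y
          then bet H φ x y else 0)) +
      (if y ∉ H ∧ x * y ∈ H ∧ (QuotientGroup.mk x : G ⧸ H) = QuotientGroup.mk y
          then bet H φ x y else 0) := by
  by_cases hy : y ∈ H
  · have h2 : ¬ (y ∉ H ∧ x * y ∈ H ∧ (QuotientGroup.mk x : G ⧸ H) = QuotientGroup.mk y) := by
      tauto
    rw [if_pos (show cond H x y from Or.inl hy), if_pos hy, if_neg h2, add_zero]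
  · by_cases hA : x ∈ H ∧ (QuotientGroup.mk (x*y) : G ⧸ H) = QuotientGroup.mk y
    · have h2 : ¬ (y ∉ H ∧ x * y ∈ H ∧ (QuotientGroup.mk x : G ⧸ H) = QuotientGroup.mk y) := by
        rintro ⟨-, hxy, -⟩
        exact hy (by simpa using H.mul_mem (H.inv_mem hA.1) hxy)
      rw [if_pos (show cond H x y from Or.inr (Or.inl hA)), if_neg hy, if_pos hA, if_neg h2, add_zero]
    · by_cases hB : x * y ∈ H ∧ (QuotientGroup.mk x : G ⧸ H) = QuotientGroup.mk y
      · rw [if_pos (show cond H x y from Or.inr (Or.inr hB)), if_neg hy, if_neg hA, if_pos ⟨hy, hB⟩, zero_add]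
      · have hc : ¬ cond H x y := by rw [cond]; tauto
        rw [if_neg hc, if_neg hy, if_neg hA, if_neg (by tauto), add_zero]

lemma w1_bound :
    (Nat.card H : ℤ) * (Nat.card G : ℤ) ≤
      ∑ y : G, ∑ x : G, (if y ∈ H then bet H φ x y else
        (if x ∈ H ∧ (QuotientGroup.mk (x*y) : G ⧸ H) = QuotientGroup.mk y
          then bet H φ x y else 0)) := by
  have key : ∀ y : G, (if y ∈ H then (Nat.card G : ℤ) else 0) ≤
      ∑ x : G, (if y ∈ H then bet H φ x y else
        (if x ∈ H ∧ (QuotientGroup.mk (x*y) : G ⧸ H) = QuotientGroup.mk y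
          then bet H φ x y else 0)) := by
    intro y
    by_cases hy : y ∈ H
    · rw [if_pos hy]
      have : ∀ x : G, (if y ∈ H then bet H φ x y else
          (if x ∈ H ∧ (QuotientGroup.mk (x*y) : G ⧸ H) = QuotientGroup.mk y
            then bet H φ x y else 0)) = 1 := by
        intro x; rw [if_pos hy, bet_one H φ hy]
      rw [Finset.sum_congr rfl (fun x _ => this x)]
      simp [Nat.card_eq_fintype_card]
    · rw [if_neg hy]
      have : ∀ x : G, (if y ∈ H then bet H φ x y else
          (if x ∈ H ∧ (QuotientGroup.mk (x*y) : G ⧸ H) = QuotientGroup.mk y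
            then bet H φ x y else 0)) =
          (if x ∈ H ∧ (QuotientGroup.mk (x*y) : G ⧸ H) = QuotientGroup.mk y
            then bet H φ x y else 0) := by
        intro x; rw [if_neg hy]
      rw [Finset.sum_congr rfl (fun x _ => this x)]
      exact middle_nonneg H φ
  calc (Nat.card H : ℤ) * (Nat.card G : ℤ)
      = ∑ y : G, (if y ∈ H then (Nat.card G : ℤ) else 0) := by
        rw [Finset.sum_ite, Finset.sum_const, Finset.sum_const, nsmul_eq_mul, nsmul_eq_mul,
          mul_zero, add_zero, card_filter_subgroup]
    _ ≤ _ := Finset.sum_le_sum (fun y _ => key y)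

lemma w2_bound :
    - ((Nat.card H : ℤ) *
        (univ.filter (fun x : G => x ∉ H ∧ x * x ∈ H)).card) ≤
      ∑ x : G, ∑ y : G,
        (if y ∉ H ∧ x * y ∈ H ∧ (QuotientGroup.mk x : G ⧸ H) = QuotientGroup.mk y
          then bet H φ x y else 0) := by
  have key : ∀ x : G,
      - (if x ∉ H ∧ x * x ∈ H then (Nat.card H : ℤ) else 0) ≤
      ∑ y : G,
        (if y ∉ H ∧ x * y ∈ H ∧ (QuotientGroup.mk x : G ⧸ H) = QuotientGroup.mk y
          then bet H φ x y else 0) := by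
    intro x
    by_cases hx : x ∉ H ∧ x * x ∈ H
    · rw [if_pos hx]
      have step1 : ∀ y : G,
          (if y ∉ H ∧ x * y ∈ H ∧ (QuotientGroup.mk x : G ⧸ H) = QuotientGroup.mk y
            then (-1 : ℤ) else 0) ≤
          (if y ∉ H ∧ x * y ∈ H ∧ (QuotientGroup.mk x : G ⧸ H) = QuotientGroup.mk y
            then bet H φ x y else 0) := by
        intro y
        by_cases h : y ∉ H ∧ x * y ∈ H ∧ (QuotientGroup.mk x : G ⧸ H) = QuotientGroup.mk y
        · rw [if_pos h, if_pos h]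
          rcases bet_pm H φ x y with h1 | h1 <;> omega
        · rw [if_neg h, if_neg h]
      have step2 :
          (univ.filter (fun y : G => y ∉ H ∧ x * y ∈ H ∧
            (QuotientGroup.mk x : G ⧸ H) = QuotientGroup.mk y)).card ≤ Nat.card H := by
        rw [← card_filter_subgroup H]
        apply Finset.card_le_card_of_injOn (fun y => x * y)
        · intro y hy
          simp only [Finset.mem_coe, mem_filter, mem_univ, true_and] at *
          exact hy.2.1
        · intro a _ b _ hab
          exact mul_left_cancel hab
      calc - (Nat.card H : ℤ)
          ≤ - ((univ.filter (fun y : G => y ∉ H ∧ x * y ∈ H ∧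
              (QuotientGroup.mk x : G ⧸ H) = QuotientGroup.mk y)).card : ℤ) := by
            have := step2; omega
        _ = ∑ y : G, (if y ∉ H ∧ x * y ∈ H ∧
              (QuotientGroup.mk x : G ⧸ H) = QuotientGroup.mk y then (-1 : ℤ) else 0) := by
            rw [Finset.sum_ite, Finset.sum_const, Finset.sum_const, nsmul_eq_mul, nsmul_eq_mul,
              mul_zero, add_zero]
            push_cast
            ring
        _ ≤ _ := Finset.sum_le_sum (fun y _ => step1 y)
    · rw [if_neg hx]
      have hzero : ∀ y : G,
          (if y ∉ H ∧ x * y ∈ H ∧ (QuotientGroup.mk x : G ⧸ H) = QuotientGroup.mk y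
            then bet H φ x y else 0) = 0 := by
        intro y
        rw [if_neg]
        rintro ⟨hyH, hxyH, hmk⟩
        apply hx
        by_cases hxH : x ∈ H
        · exact absurd (by simpa using H.mul_mem (H.inv_mem hxH) hxyH) hyH
        · refine ⟨hxH, ?_⟩
          have h1 : x⁻¹ * y ∈ H := QuotientGroup.eq.mp hmk
          have hrw : x * x = (x * y) * (x⁻¹ * y)⁻¹ := by group
          rw [hrw]
          exact H.mul_mem hxyH (H.inv_mem h1)
      rw [Finset.sum_congr rfl (fun y _ => hzero y)]
      simp
  have tot : ∑ x : G, (if x ∉ H ∧ x * x ∈ H then (Nat.card H : ℤ) else 0)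
      = (Nat.card H : ℤ) * (univ.filter (fun x : G => x ∉ H ∧ x * x ∈ H)).card := by
    rw [Finset.sum_ite, Finset.sum_const, Finset.sum_const, nsmul_eq_mul, nsmul_eq_mul,
      mul_zero, add_zero]
    push_cast
    ring
  calc - ((Nat.card H : ℤ) * (univ.filter (fun x : G => x ∉ H ∧ x * x ∈ H)).card)
      = ∑ x : G, - (if x ∉ H ∧ x * x ∈ H then (Nat.card H : ℤ) else 0) := by
        rw [Finset.sum_neg_distrib, tot]
    _ ≤ _ := Finset.sum_le_sum (fun x _ => key x)

lemma expectation_bound :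
    (Fintype.card ((G ⧸ H) → ℤˣ) : ℤ) *
        ((Nat.card H : ℤ) * Nat.card G - Nat.card H * Nat.card (Subgroup.normalizer (H : Set G)) +
          2 * Nat.card H * Nat.card H) ≤
      ∑ c : (G ⧸ H) → ℤˣ, 2 * ∑ x : G, ∑ y : G, P H φ c x y := by
  classical
  set κ : ℤ := (Fintype.card ((G ⧸ H) → ℤˣ) : ℤ) with hκ
  have hκ0 : 0 ≤ κ := by positivity
  -- swap sums and compute the expectation pointwise
  have swap : ∑ c : (G ⧸ H) → ℤˣ, ∑ x : G, ∑ y : G, P H φ c x y =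
      ∑ x : G, ∑ y : G, ∑ c : (G ⧸ H) → ℤˣ, P H φ c x y := by
    rw [Finset.sum_comm]
    exact Finset.sum_congr rfl (fun x _ => Finset.sum_comm)
  have point : ∀ x y : G, ∑ c : (G ⧸ H) → ℤˣ, P H φ c x y =
      κ * (if cond H x y then bet H φ x y else 0) := by
    intro x y
    calc ∑ c : (G ⧸ H) → ℤˣ, P H φ c x y
        = ∑ c : (G ⧸ H) → ℤˣ, gam H c x y * bet H φ x y :=
          Finset.sum_congr rfl (fun c _ => P_eq H φ c x y)
      _ = (∑ c : (G ⧸ H) → ℤˣ, gam H c x y) * bet H φ x y := by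
          rw [Finset.sum_mul]
      _ = (if cond H x y then κ else 0) * bet H φ x y := by rw [gam_sum]
      _ = κ * (if cond H x y then bet H φ x y else 0) := by
          by_cases h : cond H x y <;> simp [h]
  -- the inner double sum bound
  have inner : (Nat.card H : ℤ) * Nat.card G - Nat.card H * Nat.card (Subgroup.normalizer (H : Set G)) +
      2 * Nat.card H * Nat.card H ≤
      2 * ∑ x : G, ∑ y : G, (if cond H x y then bet H φ x y else 0) := by
    have split : ∑ x : G, ∑ y : G, (if cond H x y then bet H φ x y else 0) =
        (∑ y : G, ∑ x : G, (if y ∈ H then bet H φ x y else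
          (if x ∈ H ∧ (QuotientGroup.mk (x*y) : G ⧸ H) = QuotientGroup.mk y
            then bet H φ x y else 0))) +
        (∑ x : G, ∑ y : G,
          (if y ∉ H ∧ x * y ∈ H ∧ (QuotientGroup.mk x : G ⧸ H) = QuotientGroup.mk y
            then bet H φ x y else 0)) := by
      have e : ∀ x : G, ∑ y : G, (if cond H x y then bet H φ x y else 0) =
          (∑ y : G, (if y ∈ H then bet H φ x y else
            (if x ∈ H ∧ (QuotientGroup.mk (x*y) : G ⧸ H) = QuotientGroup.mk y
              then bet H φ x y else 0))) +
          (∑ y : G,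
            (if y ∉ H ∧ x * y ∈ H ∧ (QuotientGroup.mk x : G ⧸ H) = QuotientGroup.mk y
              then bet H φ x y else 0)) := by
        intro x
        rw [← Finset.sum_add_distrib]
        exact Finset.sum_congr rfl (fun y _ => vv_split H φ x y)
      rw [Finset.sum_congr rfl (fun x _ => e x), Finset.sum_add_distrib]
      congr 1
      exact Finset.sum_comm
    have hcast : (2:ℤ) * (univ.filter (fun x : G => x ∉ H ∧ x * x ∈ H)).card
        + 2 * Nat.card H ≤ (Nat.card G : ℤ) + Nat.card (Subgroup.normalizer (H : Set G)) := by
      exact_mod_cast count_sq H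
    have ha : (0:ℤ) ≤ Nat.card H := by positivity
    have key2 : (Nat.card H : ℤ) * Nat.card G - Nat.card H * Nat.card (Subgroup.normalizer (H : Set G)) +
        2 * Nat.card H * Nat.card H ≤
        2 * ((Nat.card H : ℤ) * Nat.card G) -
          2 * ((Nat.card H : ℤ) *
            (univ.filter (fun x : G => x ∉ H ∧ x * x ∈ H)).card) := by
      nlinarith [mul_le_mul_of_nonneg_left hcast ha]
    rw [split]
    have hw1 := w1_bound H φ
    have hw2 := w2_bound H φ
    linarith
  calc κ * ((Nat.card H : ℤ) * Nat.card G - Nat.card H * Nat.card (Subgroup.normalizer (H : Set G)) +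
          2 * Nat.card H * Nat.card H)
      ≤ κ * (2 * ∑ x : G, ∑ y : G, (if cond H x y then bet H φ x y else 0)) :=
        mul_le_mul_of_nonneg_left inner hκ0
    _ = ∑ c : (G ⧸ H) → ℤˣ, 2 * ∑ x : G, ∑ y : G, P H φ c x y := by
        have e1 : ∑ c : (G ⧸ H) → ℤˣ, 2 * (∑ x : G, ∑ y : G, P H φ c x y)
            = 2 * ∑ c : (G ⧸ H) → ℤˣ, ∑ x : G, ∑ y : G, P H φ c x y := by
          rw [Finset.mul_sum]
        have e2 : ∑ x : G, ∑ y : G, ∑ c : (G ⧸ H) → ℤˣ, P H φ c x y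
            = κ * ∑ x : G, ∑ y : G, (if cond H x y then bet H φ x y else 0) := by
          rw [Finset.mul_sum]
          refine Finset.sum_congr rfl (fun x _ => ?_)
          rw [Finset.mul_sum]
          exact Finset.sum_congr rfl (fun y _ => point x y)
        rw [e1, swap, e2]
        ring

end PLB

open PLB in
theorem parity_lower_bound {G : Type} [Group G] [Fintype G] (H : Subgroup G)
    (φ : H →* ℤˣ) (hφ : Function.Surjective φ) :
    ∃ f : G → ℝ, (∀ x, f x = 1 ∨ f x = -1) ∧ (∑ x : G, f x = 0) ∧
      (1 / 2 : ℝ) * (1 + (1 / 2) * ((Nat.card H : ℝ) / (Nat.card G : ℝ)) *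
          (1 - (Nat.card (Subgroup.normalizer (H : Set G)) : ℝ) / (Nat.card G : ℝ)) +
          (Nat.card H : ℝ) ^ 2 / (Nat.card G : ℝ) ^ 2) * (Nat.card G : ℝ) ^ 2 ≤
        (Nat.card {p : G × G // f (p.1 * p.2) = f p.1 * f p.2} : ℝ) := by
  classical
  obtain ⟨z₀, hz₀⟩ := hφ (-1)
  -- choose a good sign assignment c
  obtain ⟨c, hc⟩ : ∃ c : (G ⧸ H) → ℤˣ,
      (Nat.card H : ℤ) * Nat.card G - Nat.card H * Nat.card (Subgroup.normalizer (H : Set G)) +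
        2 * Nat.card H * Nat.card H ≤ 2 * ∑ x : G, ∑ y : G, P H φ c x y := by
    have hnon : (univ : Finset ((G ⧸ H) → ℤˣ)).Nonempty := univ_nonempty
    have h0 : ∑ _c : (G ⧸ H) → ℤˣ,
        ((Nat.card H : ℤ) * Nat.card G - Nat.card H * Nat.card (Subgroup.normalizer (H : Set G)) +
          2 * Nat.card H * Nat.card H) ≤
        ∑ c : (G ⧸ H) → ℤˣ, 2 * ∑ x : G, ∑ y : G, P H φ c x y := by
      rw [Finset.sum_const, Finset.card_univ, nsmul_eq_mul]
      exact expectation_bound H φ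
    obtain ⟨c, -, hc⟩ := Finset.exists_le_of_sum_le hnon h0
    exact ⟨c, hc⟩
  set fR : G → ℝ := fun x => (((ff H φ c x : ℤˣ) : ℤ) : ℝ) with hfR
  refine ⟨fR, ?_, ?_, ?_⟩
  · intro x
    rcases Int.units_eq_one_or (ff H φ c x) with h | h <;> simp [hfR, h]
  · -- the sum is zero
    have hnegZ : ∀ x : G, ((ff H φ c (x * (z₀ : G)) : ℤˣ) : ℤ) = -((ff H φ c x : ℤˣ) : ℤ) := by
      intro x
      have e1 : (QuotientGroup.mk (x * (z₀ : G)) : G ⧸ H) = QuotientGroup.mk x :=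
        QuotientGroup.eq.mpr (by simpa [mul_assoc] using H.inv_mem z₀.2)
      have e2 : (⟨(z₀ : G), z₀.2⟩ : H) = z₀ := rfl
      rw [ff, ff, e1, hp_mul_right H z₀.2 x, e2, map_mul, hz₀]
      push_cast
      ring
    have h1 : ∑ x : G, fR x = ∑ x : G, fR (x * (z₀ : G)) :=
      (Fintype.sum_equiv (Equiv.mulRight (z₀ : G)) (fun x => fR (x * (z₀ : G))) fR
        (fun x => rfl)).symm
    have h2 : ∀ x : G, fR (x * (z₀ : G)) = - fR x := by
      intro x
      simp only [hfR]
      exact_mod_cast congrArg (fun t : ℤ => (t : ℝ)) (hnegZ x)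
    rw [Finset.sum_congr rfl (fun x _ => h2 x), Finset.sum_neg_distrib] at h1
    linarith
  · -- the counting bound
    set cnt := (univ.filter (fun p : G × G =>
        ff H φ c (p.1 * p.2) = ff H φ c p.1 * ff H φ c p.2)).card with hcnt
    have hcard : Nat.card {p : G × G // fR (p.1 * p.2) = fR p.1 * fR p.2} = cnt := by
      rw [Nat.card_eq_fintype_card, Fintype.card_subtype]
      congr 1
      apply Finset.filter_congr
      intro p _
      simp only [hfR]
      constructor
      · intro h
        have h' : ((ff H φ c (p.1 * p.2) : ℤˣ) : ℤ) =
            ((ff H φ c p.1 * ff H φ c p.2 : ℤˣ) : ℤ) := by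
          push_cast
          exact_mod_cast h
        exact Units.ext h'
      · intro h
        rw [h]
        push_cast
        ring
    have hPval : ∀ x y : G, P H φ c x y =
        (if ff H φ c (x * y) = ff H φ c x * ff H φ c y then (1 : ℤ) else -1) := by
      intro x y
      exact unit_ite (ff H φ c (x * y)) (ff H φ c x) (ff H φ c y)
    have hS : ∑ x : G, ∑ y : G, P H φ c x y =
        2 * (cnt : ℤ) - ((Nat.card G : ℤ)) ^ 2 := by
      calc ∑ x : G, ∑ y : G, P H φ c x y
          = ∑ p : G × G, P H φ c p.1 p.2 :=
            (Fintype.sum_prod_type' (f := fun a b => P H φ c a b)).symm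
        _ = ∑ p : G × G, (if ff H φ c (p.1 * p.2) = ff H φ c p.1 * ff H φ c p.2
              then (1 : ℤ) else -1) :=
            Finset.sum_congr rfl (fun p _ => hPval p.1 p.2)
        _ = 2 * (cnt : ℤ) - ((Nat.card G : ℤ)) ^ 2 := by
            rw [Finset.sum_ite, Finset.sum_const, Finset.sum_const, nsmul_eq_mul, nsmul_eq_mul]
            have hsplitc := Finset.card_filter_add_card_filter_not
              (s := (univ : Finset (G × G)))
              (p := fun p : G × G => ff H φ c (p.1 * p.2) = ff H φ c p.1 * ff H φ c p.2)
            rw [Finset.card_univ, Fintype.card_prod, ← Nat.card_eq_fintype_card] at hsplitc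
            push_cast [← hcnt] at hsplitc ⊢
            nlinarith [hsplitc]
    have h4 : 2 * ((Nat.card G : ℤ)) ^ 2 +
        ((Nat.card H : ℤ) * Nat.card G - Nat.card H * Nat.card (Subgroup.normalizer (H : Set G)) +
          2 * Nat.card H * Nat.card H) ≤ 4 * (cnt : ℤ) := by
      rw [hS] at hc
      linarith
    rw [hcard]
    have hn : (0 : ℝ) < (Nat.card G : ℝ) := by
      have : 0 < Nat.card G := Nat.card_pos
      exact_mod_cast this
    have hR : 2 * ((Nat.card G : ℝ)) ^ 2 +
        ((Nat.card H : ℝ) * Nat.card G - Nat.card H * Nat.card (Subgroup.normalizer (H : Set G)) +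
          2 * Nat.card H * Nat.card H) ≤ 4 * (cnt : ℝ) := by
      exact_mod_cast h4
    have hT : (1 / 2 : ℝ) * (1 + (1 / 2) * ((Nat.card H : ℝ) / (Nat.card G : ℝ)) *
          (1 - (Nat.card (Subgroup.normalizer (H : Set G)) : ℝ) / (Nat.card G : ℝ)) +
          (Nat.card H : ℝ) ^ 2 / (Nat.card G : ℝ) ^ 2) * (Nat.card G : ℝ) ^ 2 =
        (2 * ((Nat.card G : ℝ)) ^ 2 +
          ((Nat.card H : ℝ) * Nat.card G - Nat.card H * Nat.card (Subgroup.normalizer (H : Set G)) +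
            2 * Nat.card H * Nat.card H)) / 4 := by
      field_simp
      ring
    rw [hT]
    linarith
end

section
/- Let G be a finite group with a subgroup H admitting a surjective (hence nontrivial) group homomorphism φ : H → {−1, 1}. Suppose there exists a set T ⊆ G of representatives for the left cosets of H (one representative per coset) such that c² = 1 for every c ∈ T. Then there exists a function f : G → {−1, 1} with Σ_{x∈G} f(x) = 0 such that the number of pairs (x, y) ∈ G × G with f(x·y) = f(x)·f(y) is at least (1/2)·(1 + |H|/|G|)·|G|². -/
open scoped BigOperators
open Finset

noncomputable section ParityAux

def uval (u : ℤˣ) : ℝ := ((u : ℤ) : ℝ)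

lemma uval_mul (u v : ℤˣ) : uval (u * v) = uval u * uval v := by simp [uval]

lemma uval_sq (u : ℤˣ) : uval u * uval u = 1 := by
  rw [← uval_mul, Int.units_mul_self]; simp [uval]

lemma uval_pm (u : ℤˣ) : uval u = 1 ∨ uval u = -1 := by
  rcases Int.units_eq_one_or u with h | h <;> simp [uval, h]

lemma uval_neg (u : ℤˣ) : uval (-u) = - uval u := by simp [uval]

lemma pm_mul {a b : ℝ} (ha : a = 1 ∨ a = -1) (hb : b = 1 ∨ b = -1) :
    a * b = 1 ∨ a * b = -1 := by
  rcases ha with h | h <;> rcases hb with h' | h' <;> rw [h, h'] <;> norm_num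

section WsumSec

variable {G : Type} [Fintype G] [DecidableEq G]

def Wsum (p q u w : G) : ℝ :=
  ∑ ε : G → ℤˣ, uval (ε p) * uval (ε q) * uval (ε u) * uval (ε w)

lemma Wsum_pp (p u : G) : Wsum p p u u = (Fintype.card (G → ℤˣ) : ℝ) := by
  unfold Wsum
  rw [show (∑ ε : G → ℤˣ, uval (ε p) * uval (ε p) * uval (ε u) * uval (ε u))
      = ∑ _ε : G → ℤˣ, (1:ℝ) from Finset.sum_congr rfl (fun ε _ => by
        linear_combination (uval (ε u) * uval (ε u)) * uval_sq (ε p) + uval_sq (ε u))]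
  simp

lemma Wsum_pqpq (p q : G) : Wsum p q p q = (Fintype.card (G → ℤˣ) : ℝ) := by
  unfold Wsum
  rw [show (∑ ε : G → ℤˣ, uval (ε p) * uval (ε q) * uval (ε p) * uval (ε q))
      = ∑ _ε : G → ℤˣ, (1:ℝ) from Finset.sum_congr rfl (fun ε _ => by
        linear_combination (uval (ε q) * uval (ε q)) * uval_sq (ε p) + uval_sq (ε q))]
  simp

lemma Wsum_pqqp (p q : G) : Wsum p q q p = (Fintype.card (G → ℤˣ) : ℝ) := by
  unfold Wsum
  rw [show (∑ ε : G → ℤˣ, uval (ε p) * uval (ε q) * uval (ε q) * uval (ε p))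
      = ∑ _ε : G → ℤˣ, (1:ℝ) from Finset.sum_congr rfl (fun ε _ => by
        linear_combination (uval (ε q) * uval (ε q)) * uval_sq (ε p) + uval_sq (ε q))]
  simp

lemma Wsum_zero₁ {p q u w : G} (h1 : p ≠ q) (h2 : p ≠ u) (h3 : p ≠ w) :
    Wsum p q u w = 0 := by
  have hinv : Function.Involutive (fun ε : G → ℤˣ => Function.update ε p (-(ε p))) := by
    intro ε; funext z
    by_cases hz : z = p
    · subst hz; simp
    · simp [Function.update_of_ne hz]
  have hsum := Fintype.sum_bijective _ hinv.bijective
    (fun ε : G → ℤˣ => -(uval (ε p) * uval (ε q) * uval (ε u) * uval (ε w)))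
    (fun ε : G → ℤˣ => uval (ε p) * uval (ε q) * uval (ε u) * uval (ε w))
    (by
      intro ε
      simp only [Function.update_self, Function.update_of_ne (Ne.symm h1),
        Function.update_of_ne (Ne.symm h2), Function.update_of_ne (Ne.symm h3), uval_neg]
      ring)
  unfold Wsum
  have : -(∑ ε : G → ℤˣ, uval (ε p) * uval (ε q) * uval (ε u) * uval (ε w))
      = ∑ ε : G → ℤˣ, uval (ε p) * uval (ε q) * uval (ε u) * uval (ε w) := by
    rw [← Finset.sum_neg_distrib]; exact hsum
  linarith

lemma Wsum_swap₂ (p q u w : G) : Wsum p q u w = Wsum q p u w :=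
  Finset.sum_congr rfl (fun ε _ => by ring)

lemma Wsum_swap₃ (p q u w : G) : Wsum p q u w = Wsum u q p w :=
  Finset.sum_congr rfl (fun ε _ => by ring)

lemma Wsum_swap₄ (p q u w : G) : Wsum p q u w = Wsum w q u p :=
  Finset.sum_congr rfl (fun ε _ => by ring)

lemma Wsum_zero₂ {p q u w : G} (h1 : q ≠ p) (h2 : q ≠ u) (h3 : q ≠ w) :
    Wsum p q u w = 0 := by rw [Wsum_swap₂]; exact Wsum_zero₁ h1 h2 h3

lemma Wsum_zero₃ {p q u w : G} (h1 : u ≠ q) (h2 : u ≠ p) (h3 : u ≠ w) :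
    Wsum p q u w = 0 := by rw [Wsum_swap₃]; exact Wsum_zero₁ h1 h2 h3

lemma Wsum_zero₄ {p q u w : G} (h1 : w ≠ q) (h2 : w ≠ u) (h3 : w ≠ p) :
    Wsum p q u w = 0 := by
  rw [Wsum_swap₄]; exact Wsum_zero₁ h1 h2 h3

end WsumSec

section PhiSec

variable {G : Type} [Group G] (H : Subgroup G) (φ : H →* ℤˣ)

open Classical in
def Phi : G → ℝ := fun g => if hg : g ∈ H then uval (φ ⟨g, hg⟩) else 0

lemma Phi_pos {g : G} (hg : g ∈ H) : Phi H φ g = uval (φ ⟨g, hg⟩) := dif_pos hg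

lemma Phi_neg {g : G} (hg : g ∉ H) : Phi H φ g = 0 := dif_neg hg

lemma Phi_pm {g : G} (hg : g ∈ H) : Phi H φ g = 1 ∨ Phi H φ g = -1 := by
  rw [Phi_pos H φ hg]; exact uval_pm _

lemma Phi_sq {g : G} (hg : g ∈ H) : Phi H φ g * Phi H φ g = 1 := by
  rw [Phi_pos H φ hg]; exact uval_sq _

lemma Phi_mul_left {k : G} (hk : k ∈ H) (g : G) :
    Phi H φ (k * g) = Phi H φ k * Phi H φ g := by
  by_cases hg : g ∈ H
  · rw [Phi_pos H φ (H.mul_mem hk hg), Phi_pos H φ hk, Phi_pos H φ hg,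
      ← uval_mul, ← map_mul]
    rfl
  · rw [Phi_neg H φ hg, Phi_neg H φ (fun hm => hg (by
      have := H.mul_mem (H.inv_mem hk) hm
      rwa [inv_mul_cancel_left] at this)), mul_zero]

lemma Phi_char_nonneg [Fintype G] (b : G) (hb : b * b = 1) :
    0 ≤ ∑ x : G, Phi H φ x * Phi H φ (b * x * b) := by
  by_cases hall : ∀ x : G, x ∈ H → b * x * b ∈ H → Phi H φ x * Phi H φ (b * x * b) = 1
  · apply Finset.sum_nonneg
    intro x _
    by_cases hx : x ∈ H
    · by_cases hbx : b * x * b ∈ H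
      · rw [hall x hx hbx]; norm_num
      · rw [Phi_neg H φ hbx, mul_zero]
    · rw [Phi_neg H φ hx, zero_mul]
  · push_neg at hall
    obtain ⟨x₀, hx₀, hbx₀, hne⟩ := hall
    have hval : Phi H φ x₀ * Phi H φ (b * x₀ * b) = -1 := by
      rcases pm_mul (Phi_pm H φ hx₀) (Phi_pm H φ hbx₀) with h | h
      · exact absurd h hne
      · exact h
    have hbb : ∀ z : G, b * (b * z) = z := fun z => by rw [← mul_assoc, hb, one_mul]
    have hconj : ∀ x : G, b * (x₀ * x) * b = (b * x₀ * b) * (b * x * b) := by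
      intro x
      simp only [mul_assoc, hbb]
    have hkey : ∀ x : G, Phi H φ (x₀ * x) * Phi H φ (b * (x₀ * x) * b)
        = -(Phi H φ x * Phi H φ (b * x * b)) := by
      intro x
      rw [Phi_mul_left H φ hx₀, hconj, Phi_mul_left H φ hbx₀]
      linear_combination (Phi H φ x * Phi H φ (b * x * b)) * hval
    have hsum : ∑ x : G, Phi H φ (x₀ * x) * Phi H φ (b * (x₀ * x) * b)
        = ∑ x : G, Phi H φ x * Phi H φ (b * x * b) :=
      Fintype.sum_equiv (Equiv.mulLeft x₀)
        (fun x => Phi H φ (x₀ * x) * Phi H φ (b * (x₀ * x) * b))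
        (fun x => Phi H φ x * Phi H φ (b * x * b))
        (fun x => rfl)
    have h2 : ∑ x : G, Phi H φ (x₀ * x) * Phi H φ (b * (x₀ * x) * b)
        = -∑ x : G, Phi H φ x * Phi H φ (b * x * b) := by
      rw [show (∑ x : G, Phi H φ (x₀ * x) * Phi H φ (b * (x₀ * x) * b))
        = ∑ x : G, -(Phi H φ x * Phi H φ (b * x * b)) from
        Finset.sum_congr rfl (fun x _ => hkey x)]
      rw [Finset.sum_neg_distrib]
    linarith [hsum, h2]

end PhiSec

end ParityAux
theorem parity_lower_bound_involutive_transversal {G : Type} [Group G] [Fintype G]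
    (H : Subgroup G) (φ : H →* ℤˣ) (hφ : Function.Surjective φ)
    (T : Set G) (hT : ∀ g : G, ∃! c, c ∈ T ∧ g⁻¹ * c ∈ H)
    (hTinv : ∀ c ∈ T, c ^ 2 = 1) :
    ∃ f : G → ℝ, (∀ x, f x = 1 ∨ f x = -1) ∧ (∑ x : G, f x = 0) ∧
      (1 / 2 : ℝ) * (1 + (Nat.card H : ℝ) / (Nat.card G : ℝ)) * (Nat.card G : ℝ) ^ 2 ≤
        (Nat.card {p : G × G // f (p.1 * p.2) = f p.1 * f p.2} : ℝ) := by
  classical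
  choose r hr using hT
  have hrT : ∀ g, r g ∈ T := fun g => (hr g).1.1
  have hrH : ∀ g, g⁻¹ * r g ∈ H := fun g => (hr g).1.2
  have hrU : ∀ g c, c ∈ T → g⁻¹ * c ∈ H → c = r g := fun g c h1 h2 => (hr g).2 c ⟨h1, h2⟩
  have hrsq : ∀ g, r g * r g = 1 := fun g => by
    have := hTinv (r g) (hrT g); rwa [pow_two] at this
  have hrinv : ∀ g, (r g)⁻¹ = r g := fun g => inv_eq_of_mul_eq_one_right (hrsq g)
  have hhH : ∀ g, (r g)⁻¹ * g ∈ H := fun g => by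
    have := H.inv_mem (hrH g); rwa [mul_inv_rev, inv_inv] at this
  have hrmul : ∀ g k, k ∈ H → r (g * k) = r g := by
    intro g k hk
    refine (hrU (g * k) (r g) (hrT g) ?_).symm
    have hx : (g * k)⁻¹ * r g = k⁻¹ * (g⁻¹ * r g) := by rw [mul_inv_rev, mul_assoc]
    rw [hx]; exact H.mul_mem (H.inv_mem hk) (hrH g)
  have hr1H : r 1 ∈ H := by have := hrH 1; rwa [inv_one, one_mul] at this
  have hmemH : ∀ x : G, x ∈ H ↔ r x = r 1 := by
    intro x
    constructor
    · intro hx; have := hrmul 1 x hx; rwa [one_mul] at this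
    · intro hx
      have h3 : r x ∈ H := by rw [hx]; exact hr1H
      have h4 := H.mul_mem h3 (hhH x)
      rwa [mul_inv_cancel_left] at h4
  have hrr : ∀ c, c ∈ T → r c = c := by
    intro c hc
    refine (hrU c c hc ?_).symm
    rw [inv_mul_cancel]; exact H.one_mem
  set M : ℝ := (Fintype.card (G → ℤˣ) : ℝ) with hM
  have hM0 : 0 ≤ M := Nat.cast_nonneg _
  set F : (G → ℤˣ) → G → ℝ := fun ε g =>
    uval (ε (r g)) * uval (ε (r 1)) * Phi H φ (r 1) * Phi H φ ((r g)⁻¹ * g) with hF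
  have hFpm : ∀ ε x, F ε x = 1 ∨ F ε x = -1 := fun ε x =>
    pm_mul (pm_mul (pm_mul (uval_pm _) (uval_pm _)) (Phi_pm H φ hr1H)) (Phi_pm H φ (hhH x))
  have hkey : ∀ ε x y, F ε (x * y) * F ε x * F ε y
      = uval (ε (r y)) * uval (ε (r 1)) * Phi H φ (r 1) * (F ε x * F ε (x * r y)) := by
    intro ε x y
    have hxy : x * y = (x * r y) * ((r y)⁻¹ * y) := by rw [mul_assoc, mul_inv_cancel_left]
    have hrxy : r (x * y) = r (x * r y) := by rw [hxy]; exact hrmul _ _ (hhH y)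
    have hhxy : (r (x * y))⁻¹ * (x * y) = ((r (x * r y))⁻¹ * (x * r y)) * ((r y)⁻¹ * y) := by
      rw [hrxy]; nth_rewrite 1 [hxy]; rw [← mul_assoc]
    simp only [hF]
    rw [hhxy, hrxy, Phi_mul_left H φ (hhH (x * r y))]
    linear_combination (uval (ε (r x)) * uval (ε (r 1)) * Phi H φ (r 1) *
      Phi H φ ((r x)⁻¹ * x) * uval (ε (r (x * r y))) * uval (ε (r y)) *
      Phi H φ ((r (x * r y))⁻¹ * (x * r y)) * uval (ε (r 1)) * uval (ε (r 1)) *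
      Phi H φ (r 1) * Phi H φ (r 1)) * (Phi_sq H φ (hhH y))
  set Q : (G → ℤˣ) → ℝ := fun ε => ∑ p : G × G,
    uval (ε (r p.2)) * uval (ε (r 1)) * Phi H φ (r 1) * (F ε p.1 * F ε (p.1 * r p.2)) with hQ
  have havg : M * ((Nat.card H : ℝ) * (Nat.card G : ℝ)) ≤ ∑ ε : G → ℤˣ, Q ε := by
    have hswap : ∑ ε : G → ℤˣ, Q ε = ∑ y : G, ∑ x : G,
        Wsum (r 1) (r y) (r x) (r (x * r y)) *
          (Phi H φ (r 1) * Phi H φ ((r x)⁻¹ * x) *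
            Phi H φ ((r (x * r y))⁻¹ * (x * r y))) := by
      simp only [hQ]
      rw [Finset.sum_comm]
      rw [show (∑ p : G × G, ∑ ε : G → ℤˣ,
          uval (ε (r p.2)) * uval (ε (r 1)) * Phi H φ (r 1) * (F ε p.1 * F ε (p.1 * r p.2)))
          = ∑ p : G × G, Wsum (r 1) (r p.2) (r p.1) (r (p.1 * r p.2)) *
            (Phi H φ (r 1) * Phi H φ ((r p.1)⁻¹ * p.1) *
              Phi H φ ((r (p.1 * r p.2))⁻¹ * (p.1 * r p.2))) from
        Finset.sum_congr rfl (fun p _ => by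
          rw [show (∑ ε : G → ℤˣ,
              uval (ε (r p.2)) * uval (ε (r 1)) * Phi H φ (r 1) * (F ε p.1 * F ε (p.1 * r p.2)))
              = ∑ ε : G → ℤˣ, (uval (ε (r 1)) * uval (ε (r p.2)) * uval (ε (r p.1)) *
                  uval (ε (r (p.1 * r p.2)))) *
                (Phi H φ (r 1) * Phi H φ ((r p.1)⁻¹ * p.1) *
                  Phi H φ ((r (p.1 * r p.2))⁻¹ * (p.1 * r p.2))) from
            Finset.sum_congr rfl (fun ε _ => by
              simp only [hF]
              linear_combination (uval (ε (r p.2)) * uval (ε (r p.1)) *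
                uval (ε (r (p.1 * r p.2))) * Phi H φ ((r p.1)⁻¹ * p.1) *
                Phi H φ ((r (p.1 * r p.2))⁻¹ * (p.1 * r p.2)) * uval (ε (r 1)) *
                Phi H φ (r 1) * Phi H φ (r 1) * Phi H φ (r 1)) * uval_sq (ε (r 1)) +
                (uval (ε (r p.2)) * uval (ε (r p.1)) * uval (ε (r (p.1 * r p.2))) *
                Phi H φ ((r p.1)⁻¹ * p.1) *
                Phi H φ ((r (p.1 * r p.2))⁻¹ * (p.1 * r p.2)) * uval (ε (r 1)) *
                Phi H φ (r 1)) * Phi_sq H φ hr1H)]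
          rw [← Finset.sum_mul]
          rfl)]
      rw [Fintype.sum_prod_type]
      rw [Finset.sum_comm]
    rw [hswap]
    have hyb : ∀ y : G, (if r y = r 1 then M * (Fintype.card G : ℝ) else 0)
        ≤ ∑ x : G, Wsum (r 1) (r y) (r x) (r (x * r y)) *
          (Phi H φ (r 1) * Phi H φ ((r x)⁻¹ * x) *
            Phi H φ ((r (x * r y))⁻¹ * (x * r y))) := by
      intro y
      by_cases hb : r y = r 1
      · rw [if_pos hb]
        have hterm : ∀ x : G, Wsum (r 1) (r y) (r x) (r (x * r y)) *
            (Phi H φ (r 1) * Phi H φ ((r x)⁻¹ * x) *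
              Phi H φ ((r (x * r y))⁻¹ * (x * r y))) = M := by
          intro x
          rw [hb, hrmul x (r 1) hr1H, Wsum_pp]
          rw [show (r x)⁻¹ * (x * r 1) = ((r x)⁻¹ * x) * r 1 from (mul_assoc _ _ _).symm]
          rw [Phi_mul_left H φ (hhH x)]
          rw [← hM]
          linear_combination (M * Phi H φ ((r x)⁻¹ * x) * Phi H φ ((r x)⁻¹ * x)) *
            Phi_sq H φ hr1H + M * Phi_sq H φ (hhH x)
        rw [Finset.sum_congr rfl (fun x _ => hterm x), Finset.sum_const, Finset.card_univ,
          nsmul_eq_mul]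
        ring_nf
        exact le_refl _
      · rw [if_neg hb]
        set b := r y with hbdef
        have hbT : b ∈ T := hrT y
        have hb2 : b * b = 1 := hrsq y
        have hbinv : b⁻¹ = b := hrinv y
        have hbnH : b ∉ H := fun h => hb ((hrr b hbT) ▸ (hmemH b).1 h)
        have hbxnotH : ∀ x : G, x ∈ H → b * x ∉ H := by
          intro x hx hm
          exact hbnH (by
            have := H.mul_mem hm (H.inv_mem hx)
            rwa [mul_assoc, mul_inv_cancel, mul_one] at this)
        have hpt : ∀ x : G, Wsum (r 1) b (r x) (r (x * b)) *
            (Phi H φ (r 1) * Phi H φ ((r x)⁻¹ * x) *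
              Phi H φ ((r (x * b))⁻¹ * (x * b)))
            = M * (Phi H φ x * Phi H φ (b * x * b)) +
              M * (Phi H φ (b * x) * Phi H φ (x * b)) := by
          intro x
          by_cases h1 : r x = r 1
          · have hxH : x ∈ H := (hmemH x).2 h1
            by_cases h2 : r (x * b) = b
            · rw [h1, h2, Wsum_pqpq, ← hM, hrinv 1, hbinv]
              rw [Phi_mul_left H φ hr1H x]
              rw [show b * (x * b) = b * x * b from (mul_assoc _ _ _).symm]
              rw [Phi_neg H φ (hbxnotH x hxH)]
              linear_combination (M * Phi H φ x * Phi H φ (b * x * b)) * Phi_sq H φ hr1H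
            · have hbxbnH : b * x * b ∉ H := by
                intro hm
                apply h2
                refine (hrU (x * b) b hbT ?_).symm
                have hcalc : (x * b)⁻¹ * b = (b * x * b)⁻¹ := by
                  rw [mul_inv_rev, mul_inv_rev, mul_inv_rev, hbinv]
                  simp [mul_assoc]
                rw [hcalc]; exact H.inv_mem hm
              rw [Wsum_zero₂ hb (fun he => hb (he.trans h1)) (Ne.symm h2), zero_mul,
                Phi_neg H φ hbxbnH, Phi_neg H φ (hbxnotH x hxH)]
              ring
          · have hxnH : x ∉ H := fun h => h1 ((hmemH x).1 h)
            by_cases h3 : r x = b ∧ r (x * b) = r 1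
            · have hxbH : x * b ∈ H := (hmemH (x * b)).2 h3.2
              rw [h3.1, h3.2, Wsum_pqqp, ← hM, hbinv, hrinv 1]
              rw [Phi_mul_left H φ hr1H (x * b)]
              rw [Phi_neg H φ hxnH]
              linear_combination (M * Phi H φ (b * x) * Phi H φ (x * b)) * Phi_sq H φ hr1H
            · have hg2 : Phi H φ (b * x) * Phi H φ (x * b) = 0 := by
                by_cases hbx : b * x ∈ H
                · have hrxb : r x = b := by
                    refine (hrU x b hbT ?_).symm
                    have := H.inv_mem hbx
                    rwa [mul_inv_rev, hbinv] at this
                  have hxbn : x * b ∉ H := fun hm => h3 ⟨hrxb, (hmemH (x * b)).1 hm⟩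
                  rw [Phi_neg H φ hxbn, mul_zero]
                · rw [Phi_neg H φ hbx, zero_mul]
              have hW : Wsum (r 1) b (r x) (r (x * b)) = 0 := by
                by_cases hu : r x = b
                · have hw1 : r (x * b) ≠ r 1 := fun hw => h3 ⟨hu, hw⟩
                  by_cases hw : r (x * b) = b
                  · exact Wsum_zero₁ (Ne.symm hb) (Ne.symm h1) (fun he => hb ((he.trans hw).symm))
                  · exact Wsum_zero₄ hw (fun he => hw (he.trans hu)) hw1
                · by_cases huw : r x = r (x * b)
                  · exact Wsum_zero₁ (Ne.symm hb) (Ne.symm h1) (fun he => h1 (huw.trans he.symm))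
                  · exact Wsum_zero₃ hu h1 huw
              rw [hW, zero_mul, hg2, Phi_neg H φ hxnH]
              ring
        have hS1 := Phi_char_nonneg H φ b hb2
        have hS2 : ∑ x : G, Phi H φ x * Phi H φ (b * x * b)
            = ∑ x : G, Phi H φ (b * x) * Phi H φ (x * b) := by
          refine Fintype.sum_equiv (Equiv.mulLeft b)
            (fun k => Phi H φ k * Phi H φ (b * k * b))
            (fun x => Phi H φ (b * x) * Phi H φ (x * b)) ?_
          intro k
          simp only [Equiv.coe_mulLeft]
          rw [show b * (b * k) = k by rw [← mul_assoc, hb2, one_mul]]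
        calc (0:ℝ) ≤ M * (∑ x : G, Phi H φ x * Phi H φ (b * x * b)) +
              M * (∑ x : G, Phi H φ (b * x) * Phi H φ (x * b)) := by
              refine add_nonneg (mul_nonneg hM0 hS1) (mul_nonneg hM0 ?_)
              rw [← hS2]; exact hS1
          _ = ∑ x : G, Wsum (r 1) b (r x) (r (x * b)) *
              (Phi H φ (r 1) * Phi H φ ((r x)⁻¹ * x) *
                Phi H φ ((r (x * b))⁻¹ * (x * b))) := by
              rw [Finset.mul_sum, Finset.mul_sum, ← Finset.sum_add_distrib]
              exact (Finset.sum_congr rfl (fun x _ => (hpt x).symm))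
    have hlb := Finset.sum_le_sum (fun y (_ : y ∈ Finset.univ) => hyb y)
    have hleft : ∑ y : G, (if r y = r 1 then M * (Fintype.card G : ℝ) else 0)
        = (Nat.card H : ℝ) * (M * (Fintype.card G : ℝ)) := by
      rw [Finset.sum_congr rfl (fun y (_ : y ∈ Finset.univ) => by
        rw [if_congr (Iff.symm (hmemH y)) rfl rfl])]
      rw [← Finset.sum_filter, Finset.sum_const, nsmul_eq_mul]
      congr 1
      rw [Nat.card_eq_fintype_card]
      norm_cast
      exact (Fintype.card_subtype (fun y : G => y ∈ H)).symm
    calc M * ((Nat.card H : ℝ) * (Nat.card G : ℝ))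
        = (Nat.card H : ℝ) * (M * (Fintype.card G : ℝ)) := by
          rw [Nat.card_eq_fintype_card (α := G)]; ring
      _ = ∑ y : G, (if r y = r 1 then M * (Fintype.card G : ℝ) else 0) := hleft.symm
      _ ≤ _ := hlb
  obtain ⟨ε, -, hε⟩ : ∃ ε ∈ Finset.univ, (Nat.card H : ℝ) * (Nat.card G : ℝ) ≤ Q ε := by
    apply Finset.exists_le_of_sum_le Finset.univ_nonempty
    rw [Finset.sum_const, Finset.card_univ, nsmul_eq_mul]
    exact havg
  obtain ⟨s₀u, hs₀u⟩ := hφ (-1)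
  have hs₀H : (s₀u : G) ∈ H := s₀u.2
  have hΦs₀ : Phi H φ (s₀u : G) = -1 := by
    rw [Phi_pos H φ hs₀H]
    rw [show (⟨(s₀u : G), hs₀H⟩ : H) = s₀u from Subtype.ext rfl, hs₀u]
    simp [uval]
  refine ⟨F ε, hFpm ε, ?_, ?_⟩
  · have hflip : ∀ x : G, F ε (x * (s₀u : G)) = - F ε x := by
      intro x
      simp only [hF]
      rw [hrmul x (s₀u : G) hs₀H]
      rw [show (r x)⁻¹ * (x * (s₀u : G)) = ((r x)⁻¹ * x) * (s₀u : G) from (mul_assoc _ _ _).symm]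
      rw [Phi_mul_left H φ (hhH x), hΦs₀]
      ring
    have h1 : ∑ x : G, F ε (x * (s₀u : G)) = ∑ x : G, F ε x :=
      Fintype.sum_equiv (Equiv.mulRight (s₀u : G)) _ _ (fun x => rfl)
    have h2 : ∑ x : G, F ε (x * (s₀u : G)) = - ∑ x : G, F ε x := by
      rw [Finset.sum_congr rfl (fun x (_ : x ∈ Finset.univ) => hflip x)]
      rw [Finset.sum_neg_distrib]
    linarith
  · have hNcard : 2 * ((Nat.card {p : G × G // F ε (p.1 * p.2) = F ε p.1 * F ε p.2}) : ℝ)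
        = ∑ p : G × G, (1 + F ε (p.1 * p.2) * F ε p.1 * F ε p.2) := by
      rw [show (∑ p : G × G, (1 + F ε (p.1 * p.2) * F ε p.1 * F ε p.2))
          = ∑ p : G × G, (if F ε (p.1 * p.2) = F ε p.1 * F ε p.2 then (2:ℝ) else 0) from
        Finset.sum_congr rfl (fun p _ => by
          rcases hFpm ε (p.1 * p.2) with h1 | h1 <;> rcases hFpm ε p.1 with h2 | h2 <;>
            rcases hFpm ε p.2 with h3 | h3 <;> rw [h1, h2, h3] <;> norm_num)]
      rw [← Finset.sum_filter, Finset.sum_const, nsmul_eq_mul]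
      rw [Nat.card_eq_fintype_card, Fintype.card_subtype]
      ring
    have hQe : ∑ p : G × G, F ε (p.1 * p.2) * F ε p.1 * F ε p.2 = Q ε := by
      simp only [hQ]
      exact Finset.sum_congr rfl (fun p _ => hkey ε p.1 p.2)
    have hsplit : ∑ p : G × G, (1 + F ε (p.1 * p.2) * F ε p.1 * F ε p.2)
        = (Fintype.card G : ℝ)^2 + Q ε := by
      rw [Finset.sum_add_distrib, hQe, Finset.sum_const, Finset.card_univ, nsmul_eq_mul,
        mul_one, Fintype.card_prod]
      push_cast
      ring
    have hGpos : 0 < (Nat.card G : ℝ) := by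
      rw [Nat.card_eq_fintype_card]; exact_mod_cast Fintype.card_pos
    have hexp : (1/2 : ℝ) * (1 + (Nat.card H : ℝ) / (Nat.card G : ℝ)) * (Nat.card G : ℝ)^2
        = ((Nat.card G : ℝ)^2 + (Nat.card H : ℝ) * (Nat.card G : ℝ)) / 2 := by
      field_simp
    have hGG : (Nat.card G : ℝ) = (Fintype.card G : ℝ) := by rw [Nat.card_eq_fintype_card]
    rw [hexp, hGG]
    rw [hGG] at hε
    have h2N := hNcard
    rw [hsplit] at h2N
    linarith
end

section
/- Let G be a finite group with a subgroup H admitting a surjective group homomorphism φ : H → {−1, 1}. Suppose there exists a left transversal T of H in G such that for every c ∈ T with H ∩ cHc ≠ ∅ (where cHc = {chc : h ∈ H}), one has c² ∈ H and φ(c²) = 1. Then there exists a function f : G → {−1, 1} with Σ_{x∈G} f(x) = 0 such that the number of pairs (x, y) ∈ G × G with f(x·y) = f(x)·f(y) is at least (1/2)·(1 + |H|/|G|)·|G|². -/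
open scoped BigOperators

open Finset


-- character sum over a finite group is nonnegative
lemma charSum_nonneg {M : Type*} [Group M] [Fintype M] (ρ : M →* ℤˣ) :
    0 ≤ ∑ m : M, ((ρ m : ℤ) : ℝ) := by
  by_cases h : ∀ m, ρ m = 1
  · apply Finset.sum_nonneg; intro m _; rw [h m]; norm_num
  · push_neg at h
    obtain ⟨m₀, hm₀⟩ := h
    have hm₀' : ρ m₀ = -1 := (Int.units_eq_one_or (ρ m₀)).resolve_left hm₀
    have key : ∑ m : M, ((ρ m : ℤ) : ℝ) = ∑ m : M, ((ρ (m₀ * m) : ℤ) : ℝ) :=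
      (Fintype.sum_equiv (Equiv.mulLeft m₀) _ _ (fun m => by simp)).symm
    have key2 : ∑ m : M, ((ρ (m₀ * m) : ℤ) : ℝ) = -∑ m : M, ((ρ m : ℤ) : ℝ) := by
      rw [← Finset.sum_neg_distrib]
      apply Finset.sum_congr rfl
      intro m _
      rw [map_mul, hm₀']
      push_cast
      ring
    have : ∑ m : M, ((ρ m : ℤ) : ℝ) = 0 := by linarith [key.trans key2]
    rw [this]

-- dite sum over subgroup
lemma diteSum_subtype {M : Type*} [Fintype M] (p : M → Prop) [DecidablePred p]
    (g : ∀ m, p m → ℝ) :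
    ∑ m : M, (if h : p m then g m h else 0) = ∑ m : {x // p x}, g m.1 m.2 := by
  calc ∑ m : M, (if h : p m then g m h else 0)
      = ∑ m ∈ univ.filter p, (if h : p m then g m h else 0) := by
        refine (Finset.sum_subset (Finset.subset_univ _) ?_).symm
        intro x _ hx
        rw [Finset.mem_filter] at hx
        push_neg at hx
        rw [dif_neg (hx (Finset.mem_univ x))]
    _ = ∑ m : {x // p x}, (if h : p m.1 then g m.1 h else 0) :=
        Finset.sum_subtype (univ.filter p) (by simp) _
    _ = ∑ m : {x // p x}, g m.1 m.2 := by
        apply Finset.sum_congr rfl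
        intro x _
        rw [dif_pos x.2]

lemma diteSum_nonneg {M : Type*} [Group M] [Fintype M] (K : Subgroup M)
    [DecidablePred (· ∈ K)] (ρ : ↥K →* ℤˣ) :
    0 ≤ ∑ m : M, (if h : m ∈ K then ((ρ ⟨m, h⟩ : ℤ) : ℝ) else 0) := by
  rw [diteSum_subtype (· ∈ K) (fun m h => ((ρ ⟨m, h⟩ : ℤ) : ℝ))]
  exact charSum_nonneg ρ

lemma neg_unit_ne (u : ℤˣ) : -u ≠ u := by
  rcases Int.units_eq_one_or u with h | h <;> rw [h] <;> decide

lemma eps_triple_sum {G : Type} [Fintype G] [DecidableEq G] (a b c : G) :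
    ∑ ε : G → ℤˣ, (((ε a : ℤ) : ℝ) * ((ε b : ℤ) : ℝ) * ((ε c : ℤ) : ℝ)) = 0 := by
  refine Finset.sum_involution (fun ε _ => fun g => -(ε g)) ?_ ?_
    (fun ε _ => Finset.mem_univ _) ?_
  · intro ε _
    push_cast
    ring
  · intro ε _ _ hcontra
    exact neg_unit_ne (ε a) (congrFun hcontra a)
  · intro ε _
    funext g
    simp

lemma eps_pair_sum {G : Type} [Fintype G] [DecidableEq G] {a b : G} (hab : a ≠ b) :
    ∑ ε : G → ℤˣ, (((ε a : ℤ) : ℝ) * ((ε b : ℤ) : ℝ)) = 0 := by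
  refine Finset.sum_involution (fun ε _ => Function.update ε a (-(ε a))) ?_ ?_
    (fun ε _ => Finset.mem_univ _) ?_
  · intro ε _
    rw [Function.update_self, Function.update_of_ne hab.symm]
    push_cast
    ring
  · intro ε _ _ hcontra
    have := congrFun hcontra a
    rw [Function.update_self] at this
    exact neg_unit_ne (ε a) this
  · intro ε _
    funext g
    by_cases hg : g = a
    · subst hg
      simp
    · rw [Function.update_of_ne hg, Function.update_of_ne hg]

set_option linter.unusedSectionVars false
section Main
variable {G : Type} [Group G] [Fintype G] [DecidableEq G]
variable (H : Subgroup G) [DecidablePred (· ∈ H)] (φ : ↥H →* ℤˣ) (R : G → G)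

lemma unit_cast_sq (u : ℤˣ) : ((u : ℤ) : ℝ) * ((u : ℤ) : ℝ) = 1 := by
  rcases Int.units_eq_one_or u with h | h <;> rw [h] <;> norm_num

lemma hR1 (hR2 : ∀ g, (R g)⁻¹ * g ∈ H) (g : G) : g⁻¹ * R g ∈ H := by
  have := H.inv_mem (hR2 g)
  rwa [mul_inv_rev, inv_inv] at this

lemma hR4 (hR3 : ∀ g k, k ∈ H → R (g * k) = R g) (x y : G) (h : x⁻¹ * y ∈ H) :
    R y = R x := by
  have := hR3 x (x⁻¹ * y) h
  rwa [mul_inv_cancel_left] at this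

lemma hR4' (hR2 : ∀ g, (R g)⁻¹ * g ∈ H) (x y : G) (h : R x = R y) : x⁻¹ * y ∈ H := by
  have hm : (x⁻¹ * R x) * ((R y)⁻¹ * y) ∈ H := H.mul_mem (hR1 H R hR2 x) (hR2 y)
  rw [h] at hm
  have : (x⁻¹ * R y) * ((R y)⁻¹ * y) = x⁻¹ * y := by group
  rwa [this] at hm

lemma hRnH (hR2 : ∀ g, (R g)⁻¹ * g ∈ H) (x : G) (h : x ∉ H) : R x ∉ H := by
  intro hc
  apply h
  have := H.mul_mem hc (hR2 x)
  rwa [mul_inv_cancel_left] at this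

lemma hRR (hR2 : ∀ g, (R g)⁻¹ * g ∈ H) (hR3 : ∀ g k, k ∈ H → R (g * k) = R g) (x : G) :
    R (R x) = R x :=
  hR4 H R hR3 x (R x) (hR1 H R hR2 x)

noncomputable def PhiE : G → ℝ := fun g => if h : g ∈ H then ((φ ⟨g, h⟩ : ℤ) : ℝ) else 0

lemma PhiE_eq {g : G} (h : g ∈ H) : PhiE H φ g = ((φ ⟨g, h⟩ : ℤ) : ℝ) := dif_pos h

lemma PhiE_mul {a b : G} (ha : a ∈ H) (hb : b ∈ H) :
    PhiE H φ (a * b) = PhiE H φ a * PhiE H φ b := by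
  rw [PhiE_eq H φ (H.mul_mem ha hb), PhiE_eq H φ ha, PhiE_eq H φ hb]
  have : (⟨a * b, H.mul_mem ha hb⟩ : ↥H) = ⟨a, ha⟩ * ⟨b, hb⟩ := rfl
  rw [this, map_mul]
  push_cast
  ring

lemma PhiE_pm {g : G} (h : g ∈ H) : PhiE H φ g = 1 ∨ PhiE H φ g = -1 := by
  rw [PhiE_eq H φ h]
  rcases Int.units_eq_one_or (φ ⟨g, h⟩) with h' | h' <;> rw [h'] <;> norm_num

lemma PhiE_sq {g : G} (h : g ∈ H) : PhiE H φ g * PhiE H φ g = 1 := by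
  rcases PhiE_pm H φ h with h' | h' <;> rw [h'] <;> norm_num

noncomputable def PhiR : G → ℝ := fun g => PhiE H φ ((R g)⁻¹ * g)

lemma PhiR_pm (hR2 : ∀ g, (R g)⁻¹ * g ∈ H) (g : G) :
    PhiR H φ R g = 1 ∨ PhiR H φ R g = -1 := PhiE_pm H φ (hR2 g)

lemma PhiR_sq (hR2 : ∀ g, (R g)⁻¹ * g ∈ H) (g : G) :
    PhiR H φ R g * PhiR H φ R g = 1 := PhiE_sq H φ (hR2 g)

lemma PhiR_mulH (hR2 : ∀ g, (R g)⁻¹ * g ∈ H) (hR3 : ∀ g k, k ∈ H → R (g * k) = R g)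
    (g k : G) (hk : k ∈ H) :
    PhiR H φ R (g * k) = PhiR H φ R g * PhiE H φ k := by
  unfold PhiR
  rw [hR3 g k hk, ← PhiE_mul H φ (hR2 g) hk, mul_assoc]

lemma PhiR_mem (hRH : ∀ g, g ∈ H → R g = 1) (g : G) (hg : g ∈ H) :
    PhiR H φ R g = PhiE H φ g := by
  unfold PhiR
  rw [hRH g hg, inv_one, one_mul]

end Main
section Main2
variable {G : Type} [Group G] [Fintype G] [DecidableEq G]
variable (H : Subgroup G) [DecidablePred (· ∈ H)] (φ : ↥H →* ℤˣ) (R : G → G)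

noncomputable def Efun (ε : G → ℤˣ) : G → ℝ :=
  fun x => if x ∈ H then 1 else ((ε (R x) : ℤ) : ℝ)

noncomputable def Ffun (ε : G → ℤˣ) : G → ℝ :=
  fun x => Efun H R ε x * PhiR H φ R x

lemma sum_eps_point (hR2 : ∀ g, (R g)⁻¹ * g ∈ H)
    (hR3 : ∀ g k, k ∈ H → R (g * k) = R g)
    (hRH : ∀ g, g ∈ H → R g = 1) (x y : G) :
    ∑ ε : G → ℤˣ, Ffun H φ R ε (x * y) * Ffun H φ R ε x * Ffun H φ R ε y =
      (if y ∈ H then ((Fintype.card (G → ℤˣ) : ℝ)) else 0)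
      + (if y ∉ H ∧ x ∈ H ∧ y⁻¹ * x * y ∈ H then
          (Fintype.card (G → ℤˣ) : ℝ) * (PhiR H φ R (x * y) * PhiR H φ R x * PhiR H φ R y)
        else 0)
      + (if y ∉ H ∧ x ∉ H ∧ x⁻¹ * y ∈ H ∧ x * y ∈ H then
          (Fintype.card (G → ℤˣ) : ℝ) * (PhiR H φ R (x * y) * PhiR H φ R x * PhiR H φ R y)
        else 0) := by
  have key : ∀ ε : G → ℤˣ, Ffun H φ R ε (x * y) * Ffun H φ R ε x * Ffun H φ R ε y =
      (Efun H R ε (x * y) * Efun H R ε x * Efun H R ε y) *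
        (PhiR H φ R (x * y) * PhiR H φ R x * PhiR H φ R y) := by
    intro ε
    unfold Ffun
    ring
  rw [Finset.sum_congr rfl (fun ε _ => key ε), ← Finset.sum_mul]
  set q := PhiR H φ R (x * y) * PhiR H φ R x * PhiR H φ R y with hq
  by_cases hy : y ∈ H
  · -- case 1
    have hxyH : x * y ∈ H ↔ x ∈ H := by
      constructor
      · intro h
        have := H.mul_mem h (H.inv_mem hy)
        rwa [mul_inv_cancel_right] at this
      · intro h
        exact H.mul_mem h hy
    have hTT : ∑ ε : G → ℤˣ, Efun H R ε (x * y) * Efun H R ε x * Efun H R ε y =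
        (Fintype.card (G → ℤˣ) : ℝ) := by
      have : ∀ ε : G → ℤˣ, Efun H R ε (x * y) * Efun H R ε x * Efun H R ε y = 1 := by
        intro ε
        unfold Efun
        rw [if_pos hy]
        by_cases hx : x ∈ H
        · rw [if_pos hx, if_pos (hxyH.mpr hx)]
          norm_num
        · rw [if_neg hx, if_neg (fun h => hx (hxyH.mp h)), hR3 x y hy, mul_one]
          exact unit_cast_sq _
      rw [Finset.sum_congr rfl (fun ε _ => this ε), Finset.sum_const]
      simp
    rw [hTT]
    have hq1 : q = 1 := by
      rw [hq, PhiR_mulH H φ R hR2 hR3 x y hy, PhiR_mem H φ R hRH y hy]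
      have h1 := PhiR_sq H φ R hR2 x
      have h2 := PhiE_sq H φ hy
      nlinarith [h1, h2]
    rw [hq1, mul_one, if_pos hy, if_neg (fun h => h.1 hy), if_neg (fun h => h.1 hy)]
    ring
  · by_cases hx : x ∈ H
    · -- case 2/3 : x ∈ H, y ∉ H
      have hxyH : x * y ∉ H := by
        intro h
        apply hy
        have := H.mul_mem (H.inv_mem hx) h
        rwa [inv_mul_cancel_left] at this
      by_cases hc : y⁻¹ * x * y ∈ H
      · have hRxy : R (x * y) = R y := by
          apply hR4 H R hR3
          have : y⁻¹ * (x * y) = y⁻¹ * x * y := by group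
          rw [this]
          exact hc
        have hTT : ∑ ε : G → ℤˣ, Efun H R ε (x * y) * Efun H R ε x * Efun H R ε y =
            (Fintype.card (G → ℤˣ) : ℝ) := by
          have : ∀ ε : G → ℤˣ, Efun H R ε (x * y) * Efun H R ε x * Efun H R ε y = 1 := by
            intro ε
            unfold Efun
            rw [if_pos hx, if_neg hy, if_neg hxyH, hRxy, mul_one]
            exact unit_cast_sq _
          rw [Finset.sum_congr rfl (fun ε _ => this ε), Finset.sum_const]
          simp
        rw [hTT, if_neg hy, if_pos ⟨hy, hx, hc⟩,
          if_neg (fun h : y ∉ H ∧ x ∉ H ∧ _ ∧ _ => h.2.1 hx)]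
        ring
      · have hRne : R (x * y) ≠ R y := by
          intro h
          apply hc
          have : y⁻¹ * x * y = y⁻¹ * (x * y) := by group
          rw [this]
          exact hR4' H R hR2 y (x * y) h.symm
        have hTT : ∑ ε : G → ℤˣ, Efun H R ε (x * y) * Efun H R ε x * Efun H R ε y = 0 := by
          have : ∀ ε : G → ℤˣ, Efun H R ε (x * y) * Efun H R ε x * Efun H R ε y =
              ((ε (R (x*y)) : ℤ) : ℝ) * ((ε (R y) : ℤ) : ℝ) := by
            intro ε
            unfold Efun
            rw [if_pos hx, if_neg hy, if_neg hxyH]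
            ring
          rw [Finset.sum_congr rfl (fun ε _ => this ε)]
          exact eps_pair_sum hRne
        rw [hTT, if_neg hy, if_neg (fun h : ¬y ∈ H ∧ x ∈ H ∧ _ => hc h.2.2),
          if_neg (fun h : y ∉ H ∧ x ∉ H ∧ _ ∧ _ => h.2.1 hx)]
        ring
    · -- x ∉ H, y ∉ H
      by_cases hxy : x * y ∈ H
      · by_cases hs : x⁻¹ * y ∈ H
        · have hRyx : R y = R x := hR4 H R hR3 x y hs
          have hTT : ∑ ε : G → ℤˣ, Efun H R ε (x * y) * Efun H R ε x * Efun H R ε y =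
              (Fintype.card (G → ℤˣ) : ℝ) := by
            have : ∀ ε : G → ℤˣ, Efun H R ε (x * y) * Efun H R ε x * Efun H R ε y = 1 := by
              intro ε
              unfold Efun
              rw [if_pos hxy, if_neg hx, if_neg hy, hRyx, one_mul]
              exact unit_cast_sq _
            rw [Finset.sum_congr rfl (fun ε _ => this ε), Finset.sum_const]
            simp
          rw [hTT, if_neg hy, if_neg (fun h : ¬y ∈ H ∧ x ∈ H ∧ _ => hx h.2.1),
            if_pos ⟨hy, hx, hs, hxy⟩]
          ring
        · have hRne : R x ≠ R y := fun h => hs (hR4' H R hR2 x y h)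
          have hTT : ∑ ε : G → ℤˣ, Efun H R ε (x * y) * Efun H R ε x * Efun H R ε y = 0 := by
            have : ∀ ε : G → ℤˣ, Efun H R ε (x * y) * Efun H R ε x * Efun H R ε y =
                ((ε (R x) : ℤ) : ℝ) * ((ε (R y) : ℤ) : ℝ) := by
              intro ε
              unfold Efun
              rw [if_pos hxy, if_neg hx, if_neg hy]
              ring
            rw [Finset.sum_congr rfl (fun ε _ => this ε)]
            exact eps_pair_sum hRne
          rw [hTT, if_neg hy, if_neg (fun h : ¬y ∈ H ∧ x ∈ H ∧ _ => hx h.2.1),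
            if_neg (fun h : y ∉ H ∧ x ∉ H ∧ _ ∧ _ => hs h.2.2.1)]
          ring
      · have hTT : ∑ ε : G → ℤˣ, Efun H R ε (x * y) * Efun H R ε x * Efun H R ε y = 0 := by
          have : ∀ ε : G → ℤˣ, Efun H R ε (x * y) * Efun H R ε x * Efun H R ε y =
              ((ε (R (x*y)) : ℤ) : ℝ) * ((ε (R x) : ℤ) : ℝ) * ((ε (R y) : ℤ) : ℝ) := by
            intro ε
            unfold Efun
            rw [if_neg hxy, if_neg hx, if_neg hy]
          rw [Finset.sum_congr rfl (fun ε _ => this ε)]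
          exact eps_triple_sum _ _ _
        rw [hTT, if_neg hy, if_neg (fun h : ¬y ∈ H ∧ x ∈ H ∧ _ => hx h.2.1),
          if_neg (fun h : y ∉ H ∧ x ∉ H ∧ _ ∧ _ => hxy h.2.2.2)]
        ring

end Main2
section Main3
variable {G : Type} [Group G] [Fintype G] [DecidableEq G]
variable (H : Subgroup G) [DecidablePred (· ∈ H)] (φ : ↥H →* ℤˣ) (R : G → G)

lemma phi_mk_eq {a b : G} (ha : a ∈ H) (hb : b ∈ H) (h : a = b) :
    φ ⟨a, ha⟩ = φ ⟨b, hb⟩ := by subst h; rfl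

lemma W2_sum_nonneg (hR2 : ∀ g, (R g)⁻¹ * g ∈ H)
    (hR3 : ∀ g k, k ∈ H → R (g * k) = R g)
    (hRH : ∀ g, g ∈ H → R g = 1) (y : G) :
    0 ≤ ∑ x : G, (if y ∉ H ∧ x ∈ H ∧ y⁻¹ * x * y ∈ H then
      (Fintype.card (G → ℤˣ) : ℝ) * (PhiR H φ R (x * y) * PhiR H φ R x * PhiR H φ R y)
    else 0) := by
  by_cases hy : y ∈ H
  · apply Finset.sum_nonneg
    intro x _
    rw [if_neg (fun h => h.1 hy)]
  · set K : Subgroup G :=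
      { carrier := {x | x ∈ H ∧ y⁻¹ * x * y ∈ H}
        one_mem' := ⟨H.one_mem, by
          have : y⁻¹ * 1 * y = 1 := by group
          rw [this]; exact H.one_mem⟩
        mul_mem' := fun {a b} ha hb => ⟨H.mul_mem ha.1 hb.1, by
          have : y⁻¹ * (a * b) * y = (y⁻¹ * a * y) * (y⁻¹ * b * y) := by group
          rw [this]; exact H.mul_mem ha.2 hb.2⟩
        inv_mem' := fun {a} ha => ⟨H.inv_mem ha.1, by
          have : y⁻¹ * a⁻¹ * y = (y⁻¹ * a * y)⁻¹ := by group
          rw [this]; exact H.inv_mem ha.2⟩ } with hKdef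
    have hKmem : ∀ x : G, x ∈ K ↔ (x ∈ H ∧ y⁻¹ * x * y ∈ H) := fun x => Iff.rfl
    haveI : DecidablePred (· ∈ K) := fun x => decidable_of_iff _ (hKmem x).symm
    have hle : K ≤ H := fun x hx => ((hKmem x).mp hx).1
    set c2 : ↥K →* G := ((MulAut.conj y⁻¹).toMonoidHom).comp K.subtype with hc2def
    have hc2eq : ∀ k : ↥K, c2 k = y⁻¹ * k.1 * y := by
      intro k
      show (MulAut.conj y⁻¹) k.1 = _
      rw [MulAut.conj_apply, inv_inv]
    have hc2mem : ∀ k : ↥K, c2 k ∈ H := fun k => by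
      rw [hc2eq k]; exact ((hKmem k.1).mp k.2).2
    set ψ : ↥K →* ℤˣ := (φ.comp (Subgroup.inclusion hle)) * (φ.comp (c2.codRestrict H hc2mem))
      with hψdef
    have hψval : ∀ (x : G) (h : x ∈ K), ((ψ ⟨x, h⟩ : ℤ) : ℝ) =
        PhiE H φ x * PhiE H φ (y⁻¹ * x * y) := by
      intro x h
      have h1 : ψ ⟨x, h⟩ = φ ⟨x, ((hKmem x).mp h).1⟩ * φ ⟨y⁻¹ * x * y, ((hKmem x).mp h).2⟩ := by
        rw [MonoidHom.mul_apply]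
        have e1 : (φ.comp (Subgroup.inclusion hle)) ⟨x, h⟩ = φ ⟨x, ((hKmem x).mp h).1⟩ := rfl
        have e2 : (φ.comp (c2.codRestrict H hc2mem)) ⟨x, h⟩
            = φ ⟨c2 ⟨x, h⟩, hc2mem ⟨x, h⟩⟩ := rfl
        rw [e1, e2, phi_mk_eq H φ (hc2mem ⟨x, h⟩) ((hKmem x).mp h).2 (hc2eq ⟨x, h⟩)]
      rw [h1, PhiE_eq H φ ((hKmem x).mp h).1, PhiE_eq H φ ((hKmem x).mp h).2]
      push_cast
      ring
    have heq : ∀ x : G, (if y ∉ H ∧ x ∈ H ∧ y⁻¹ * x * y ∈ H then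
        (Fintype.card (G → ℤˣ) : ℝ) * (PhiR H φ R (x * y) * PhiR H φ R x * PhiR H φ R y)
      else 0) = (Fintype.card (G → ℤˣ) : ℝ) *
        (if h : x ∈ K then ((ψ ⟨x, h⟩ : ℤ) : ℝ) else 0) := by
      intro x
      by_cases hxK : x ∈ K
      · obtain ⟨hxH, hconj⟩ := (hKmem x).mp hxK
        rw [if_pos ⟨hy, hxH, hconj⟩, dif_pos hxK, hψval x hxK]
        congr 1
        have exy : x * y = y * (y⁻¹ * x * y) := by group
        rw [exy, PhiR_mulH H φ R hR2 hR3 y _ hconj, PhiR_mem H φ R hRH x hxH]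
        have hsq := PhiR_sq H φ R hR2 y
        linear_combination (PhiE H φ x * PhiE H φ (y⁻¹ * x * y)) * hsq
      · rw [if_neg (fun h => hxK ((hKmem x).mpr ⟨h.2.1, h.2.2⟩)), dif_neg hxK, mul_zero]
    rw [Finset.sum_congr rfl (fun x _ => heq x), ← Finset.mul_sum]
    exact mul_nonneg (Nat.cast_nonneg _) (diteSum_nonneg K ψ)

end Main3
section Main4
variable {G : Type} [Group G] [Fintype G] [DecidableEq G]
variable (H : Subgroup G) [DecidablePred (· ∈ H)] (φ : ↥H →* ℤˣ) (R : G → G)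

lemma W3_inner (hR2 : ∀ g, (R g)⁻¹ * g ∈ H)
    (hR3 : ∀ g k, k ∈ H → R (g * k) = R g)
    (hRH : ∀ g, g ∈ H → R g = 1) (x : G) :
    ∑ y : G, (if y ∉ H ∧ x ∉ H ∧ x⁻¹ * y ∈ H ∧ x * y ∈ H then
        (Fintype.card (G → ℤˣ) : ℝ) * (PhiR H φ R (x * y) * PhiR H φ R x * PhiR H φ R y)
      else 0) =
      (if x ∉ H ∧ x * x ∈ H then
        ((Finset.univ.filter (· ∈ H)).card : ℝ) *
          ((Fintype.card (G → ℤˣ) : ℝ) * PhiE H φ (x * x))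
      else 0) := by
  rw [← Equiv.sum_comp (Equiv.mulLeft x) (fun y => if y ∉ H ∧ x ∉ H ∧ x⁻¹ * y ∈ H ∧ x * y ∈ H then
        (Fintype.card (G → ℤˣ) : ℝ) * (PhiR H φ R (x * y) * PhiR H φ R x * PhiR H φ R y)
      else 0)]
  have hpt : ∀ m : G, (if (x * m) ∉ H ∧ x ∉ H ∧ x⁻¹ * (x * m) ∈ H ∧ x * (x * m) ∈ H then
        (Fintype.card (G → ℤˣ) : ℝ) * (PhiR H φ R (x * (x * m)) * PhiR H φ R x * PhiR H φ R (x * m))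
      else 0) =
      (if x ∉ H ∧ x * x ∈ H then
        (if m ∈ H then (Fintype.card (G → ℤˣ) : ℝ) * PhiE H φ (x * x) else 0) else 0) := by
    intro m
    by_cases hx : x ∈ H
    · rw [if_neg (fun h => h.2.1 hx), if_neg (fun h => h.1 hx)]
    · by_cases hm : m ∈ H
      · by_cases hxx : x * x ∈ H
        · have hxm : x * m ∉ H := by
            intro h
            apply hx
            have := H.mul_mem h (H.inv_mem hm)
            rwa [mul_inv_cancel_right] at this
          have h3 : x⁻¹ * (x * m) ∈ H := by rwa [inv_mul_cancel_left]
          have he : x * (x * m) = (x * x) * m := by group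
          have h4 : x * (x * m) ∈ H := by rw [he]; exact H.mul_mem hxx hm
          rw [if_pos ⟨hxm, hx, h3, h4⟩, if_pos ⟨hx, hxx⟩, if_pos hm]
          congr 1
          rw [he, PhiR_mulH H φ R hR2 hR3 (x * x) m hm, PhiR_mem H φ R hRH (x * x) hxx,
            PhiR_mulH H φ R hR2 hR3 x m hm]
          have hsP := PhiR_sq H φ R hR2 x
          have hsB := PhiE_sq H φ hm
          linear_combination (PhiE H φ (x * x) * PhiE H φ m * PhiE H φ m) * hsP +
            PhiE H φ (x * x) * hsB
        · have : ¬(x * (x * m) ∈ H) := by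
            intro h
            apply hxx
            have := H.mul_mem h (H.inv_mem hm)
            have he : x * (x * m) * m⁻¹ = x * x := by group
            rwa [he] at this
          rw [if_neg (fun h => this h.2.2.2), if_neg (fun h => hxx h.2)]
      · have : ¬(x⁻¹ * (x * m) ∈ H) := by rwa [inv_mul_cancel_left]
        rw [if_neg (fun h => this h.2.2.1)]
        by_cases hxx2 : x ∉ H ∧ x * x ∈ H
        · rw [if_pos hxx2, if_neg hm]
        · rw [if_neg hxx2]
  calc ∑ m : G, _ = ∑ m : G, (if x ∉ H ∧ x * x ∈ H then
        (if m ∈ H then (Fintype.card (G → ℤˣ) : ℝ) * PhiE H φ (x * x) else 0) else 0) := by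
        apply Finset.sum_congr rfl
        intro m _
        exact hpt m
    _ = _ := by
        by_cases hxx2 : x ∉ H ∧ x * x ∈ H
        · simp only [if_pos hxx2]
          rw [Finset.sum_ite, Finset.sum_const, Finset.sum_const_zero, add_zero,
            nsmul_eq_mul]
        · simp only [if_neg hxx2, Finset.sum_const_zero]

lemma V_core_nonneg (T : Set G)
    (hTsq : ∀ c ∈ T, (∃ h : ↥H, c * (h : G) * c ∈ H) → ∃ hc2 : c * c ∈ H, φ ⟨c * c, hc2⟩ = 1)
    (hR2 : ∀ g, (R g)⁻¹ * g ∈ H)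
    (hR3 : ∀ g k, k ∈ H → R (g * k) = R g)
    (hRT : ∀ x, x ∉ H → R x ∈ T) :
    0 ≤ ∑ x : G, (if x ∉ H ∧ x * x ∈ H then PhiE H φ (x * x) else 0) := by
  rw [← Finset.sum_fiberwise_of_maps_to (fun x (_ : x ∈ Finset.univ) => Finset.mem_univ (R x))
    (fun x => if x ∉ H ∧ x * x ∈ H then PhiE H φ (x * x) else 0)]
  apply Finset.sum_nonneg
  intro c _
  by_cases hcH : c ∈ H
  · apply Finset.sum_nonneg
    intro x hx
    rw [Finset.mem_filter] at hx
    have hxH : x ∈ H := by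
      by_contra h
      exact (hRnH H R hR2 x h) (hx.2 ▸ hcH)
    rw [if_neg (fun hcond => hcond.1 hxH)]
  · by_cases hex : ∃ x, R x = c ∧ x ∉ H ∧ x * x ∈ H
    · obtain ⟨x₁, hx₁R, hx₁H, hx₁sq⟩ := hex
      have hcT : c ∈ T := hx₁R ▸ hRT x₁ hx₁H
      have hRc : R c = c := by rw [← hx₁R]; exact hRR H R hR2 hR3 x₁
      have hh₁ : c⁻¹ * x₁ ∈ H := by rw [← hx₁R]; exact hR2 x₁
      have hchc : c * (c⁻¹ * x₁) * c ∈ H := by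
        have he : c * (c⁻¹ * x₁) * c = (x₁ * x₁) * (x₁⁻¹ * c) := by group
        rw [he]
        refine H.mul_mem hx₁sq ?_
        have := H.inv_mem hh₁
        rwa [mul_inv_rev, inv_inv] at this
      obtain ⟨hc2, hφc2⟩ := hTsq c hcT ⟨⟨c⁻¹ * x₁, hh₁⟩, hchc⟩
      have hφc2' : PhiE H φ (c * c) = 1 := by
        rw [PhiE_eq H φ hc2, hφc2]
        norm_num
      have hfib : ∑ x ∈ Finset.univ.filter (fun x => R x = c),
          (if x ∉ H ∧ x * x ∈ H then PhiE H φ (x * x) else 0)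
          = ∑ h : ↥H, (if (c * h.1) ∉ H ∧ (c * h.1) * (c * h.1) ∈ H then
              PhiE H φ ((c * h.1) * (c * h.1)) else 0) := by
        refine Finset.sum_bij (fun x hx => (⟨c⁻¹ * x, by
            rw [Finset.mem_filter] at hx
            rw [← hx.2]
            exact hR2 x⟩ : ↥H)) (fun a ha => Finset.mem_univ _) ?_ ?_ ?_
        · intro a ha b hb hab
          have := congrArg (fun t : ↥H => c * t.1) hab
          simpa [mul_inv_cancel_left] using this
        · intro b _
          refine ⟨c * b.1, Finset.mem_filter.mpr ⟨Finset.mem_univ _, by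
            rw [hR3 c b.1 b.2, hRc]⟩, ?_⟩
          ext
          simp [inv_mul_cancel_left]
        · intro a ha
          simp only [mul_inv_cancel_left]
      rw [hfib]
      -- subgroup of ↥H and character
      set Kc : Subgroup ↥H := Subgroup.comap ((MulAut.conj c).toMonoidHom.comp H.subtype) H
        with hKc
      have hKcmem : ∀ h : ↥H, h ∈ Kc ↔ c * h.1 * c⁻¹ ∈ H := by
        intro h
        rw [hKc, Subgroup.mem_comap]
        show (MulAut.conj c) h.1 ∈ H ↔ _
        rw [MulAut.conj_apply]
      haveI : DecidablePred (· ∈ Kc) := fun h => decidable_of_iff _ (hKcmem h).symm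
      set inner : ↥Kc →* G := ((MulAut.conj c).toMonoidHom.comp H.subtype).comp Kc.subtype
        with hinner
      have hinval : ∀ k : ↥Kc, inner k = c * k.1.1 * c⁻¹ := by
        intro k
        show (MulAut.conj c) k.1.1 = _
        rw [MulAut.conj_apply]
      have hinmem : ∀ k : ↥Kc, inner k ∈ H := by
        intro k
        rw [hinval]
        exact (hKcmem k.1).mp k.2
      set ψ : ↥Kc →* ℤˣ := (φ.comp ((inner).codRestrict H hinmem)) * (φ.comp Kc.subtype)
        with hψ
      have hψval : ∀ (h : ↥H) (hk : h ∈ Kc), ((ψ ⟨h, hk⟩ : ℤ) : ℝ) =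
          PhiE H φ (c * h.1 * c⁻¹) * PhiE H φ h.1 := by
        intro h hk
        have h1 : ψ ⟨h, hk⟩ = φ ⟨c * h.1 * c⁻¹, (hKcmem h).mp hk⟩ * φ h := by
          rw [MonoidHom.mul_apply]
          have e2 : (φ.comp ((inner).codRestrict H hinmem)) ⟨h, hk⟩
              = φ ⟨inner ⟨h, hk⟩, hinmem ⟨h, hk⟩⟩ := rfl
          have e3 : (φ.comp Kc.subtype) ⟨h, hk⟩ = φ h := rfl
          rw [e2, e3, phi_mk_eq H φ (hinmem ⟨h, hk⟩) ((hKcmem h).mp hk) (hinval ⟨h, hk⟩)]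
        rw [h1, PhiE_eq H φ ((hKcmem h).mp hk), PhiE_eq H φ h.2]
        have : (⟨h.1, h.2⟩ : ↥H) = h := rfl
        rw [this]
        push_cast
        ring
      have hpt2 : ∀ h : ↥H, (if (c * h.1) ∉ H ∧ (c * h.1) * (c * h.1) ∈ H then
            PhiE H φ ((c * h.1) * (c * h.1)) else 0) =
          (if hk : h ∈ Kc then ((ψ ⟨h, hk⟩ : ℤ) : ℝ) else 0) := by
        intro h
        have hchH : c * h.1 ∉ H := by
          intro hmem
          apply hcH
          have := H.mul_mem hmem (H.inv_mem h.2)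
          rwa [mul_inv_cancel_right] at this
        by_cases hk : h ∈ Kc
        · have hconj : c * h.1 * c⁻¹ ∈ H := (hKcmem h).mp hk
          have he2 : (c * h.1) * (c * h.1) = ((c * h.1 * c⁻¹) * (c * c)) * h.1 := by group
          have hsq : (c * h.1) * (c * h.1) ∈ H := by
            rw [he2]
            exact H.mul_mem (H.mul_mem hconj hc2) h.2
          rw [if_pos ⟨hchH, hsq⟩, dif_pos hk, hψval h hk, he2,
            PhiE_mul H φ (H.mul_mem hconj hc2) h.2, PhiE_mul H φ hconj hc2, hφc2']
          ring
        · have : ¬((c * h.1) * (c * h.1) ∈ H) := by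
            intro hmem
            apply hk
            rw [hKcmem h]
            have he3 : c * h.1 * c⁻¹ = (((c * h.1) * (c * h.1)) * h.1⁻¹) * (c * c)⁻¹ := by group
            rw [he3]
            exact H.mul_mem (H.mul_mem hmem (H.inv_mem h.2)) (H.inv_mem hc2)
          rw [if_neg (fun hcond => this hcond.2), dif_neg hk]
      rw [Finset.sum_congr rfl (fun h _ => hpt2 h)]
      exact diteSum_nonneg Kc ψ
    · push_neg at hex
      apply Finset.sum_nonneg
      intro x hx
      rw [Finset.mem_filter] at hx
      rw [if_neg ?_]
      intro hcond
      exact (hex x hx.2 hcond.1) hcond.2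

end Main4
theorem parity_lower_bound_weak_transversal {G : Type} [Group G] [Fintype G]
    (H : Subgroup G) (φ : H →* ℤˣ) (hφ : Function.Surjective φ)
    (T : Set G) (hT : ∀ g : G, ∃! c, c ∈ T ∧ g⁻¹ * c ∈ H)
    (hTsq : ∀ c ∈ T, (∃ h : H, c * (h : G) * c ∈ H) →
      ∃ hc2 : c * c ∈ H, φ ⟨c * c, hc2⟩ = 1) :
    ∃ f : G → ℝ, (∀ x, f x = 1 ∨ f x = -1) ∧ (∑ x : G, f x = 0) ∧
      (1 / 2 : ℝ) * (1 + (Nat.card H : ℝ) / (Nat.card G : ℝ)) * (Nat.card G : ℝ) ^ 2 ≤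
        (Nat.card {p : G × G // f (p.1 * p.2) = f p.1 * f p.2} : ℝ) := by
  classical
  -- construct the representative function
  obtain ⟨R, hRH, hRn⟩ : ∃ R : G → G, (∀ g, g ∈ H → R g = 1) ∧
      (∀ g, g ∉ H → (R g ∈ T ∧ g⁻¹ * R g ∈ H)) := by
    refine ⟨fun g => if h : g ∈ H then 1 else Classical.choose (hT g).exists,
      fun g h => dif_pos h, fun g h => ?_⟩
    simp only [dif_neg h]
    exact Classical.choose_spec (hT g).exists
  have hR2 : ∀ g, (R g)⁻¹ * g ∈ H := by
    intro g
    by_cases hg : g ∈ H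
    · rw [hRH g hg, inv_one, one_mul]; exact hg
    · have := H.inv_mem (hRn g hg).2
      rwa [mul_inv_rev, inv_inv] at this
  have hR3 : ∀ g k, k ∈ H → R (g * k) = R g := by
    intro g k hk
    by_cases hg : g ∈ H
    · rw [hRH g hg, hRH (g * k) (H.mul_mem hg hk)]
    · have hgk : g * k ∉ H := by
        intro h
        apply hg
        have := H.mul_mem h (H.inv_mem hk)
        rwa [mul_inv_cancel_right] at this
      refine (hT (g * k)).unique ⟨(hRn (g * k) hgk).1, (hRn (g * k) hgk).2⟩
        ⟨(hRn g hg).1, ?_⟩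
      have h1 : (g * k)⁻¹ * R g = k⁻¹ * (g⁻¹ * R g) := by group
      rw [h1]
      exact H.mul_mem (H.inv_mem hk) (hRn g hg).2
  have hRT : ∀ x, x ∉ H → R x ∈ T := fun x h => (hRn x h).1
  set Mr : ℝ := (Fintype.card (G → ℤˣ) : ℝ) with hMr
  set Hf : ℕ := (Finset.univ.filter (· ∈ H)).card with hHf
  set Gc : ℕ := Fintype.card G with hGc
  set Stot : (G → ℤˣ) → ℝ := fun ε => ∑ x : G, ∑ y : G,
    Ffun H φ R ε (x * y) * Ffun H φ R ε x * Ffun H φ R ε y with hStot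
  -- total sum decomposition
  have hswap : ∑ ε : G → ℤˣ, Stot ε = ∑ x : G, ∑ y : G, ∑ ε : G → ℤˣ,
      Ffun H φ R ε (x * y) * Ffun H φ R ε x * Ffun H φ R ε y := by
    rw [hStot]
    rw [Finset.sum_comm]
    apply Finset.sum_congr rfl
    intro x _
    rw [Finset.sum_comm]
  have hdecomp : ∑ ε : G → ℤˣ, Stot ε =
      (∑ x : G, ∑ y : G, (if y ∈ H then Mr else 0))
      + (∑ x : G, ∑ y : G, (if y ∉ H ∧ x ∈ H ∧ y⁻¹ * x * y ∈ H then
          Mr * (PhiR H φ R (x * y) * PhiR H φ R x * PhiR H φ R y) else 0))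
      + (∑ x : G, ∑ y : G, (if y ∉ H ∧ x ∉ H ∧ x⁻¹ * y ∈ H ∧ x * y ∈ H then
          Mr * (PhiR H φ R (x * y) * PhiR H φ R x * PhiR H φ R y) else 0)) := by
    rw [hswap, ← Finset.sum_add_distrib, ← Finset.sum_add_distrib]
    apply Finset.sum_congr rfl
    intro x _
    rw [← Finset.sum_add_distrib, ← Finset.sum_add_distrib]
    apply Finset.sum_congr rfl
    intro y _
    exact sum_eps_point H φ R hR2 hR3 hRH x y
  have hW1 : ∑ x : G, ∑ y : G, (if y ∈ H then Mr else 0) = (Gc : ℝ) * ((Hf : ℝ) * Mr) := by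
    have hin : ∑ y : G, (if y ∈ H then Mr else 0) = (Hf : ℝ) * Mr := by
      rw [Finset.sum_ite, Finset.sum_const, Finset.sum_const_zero, add_zero, nsmul_eq_mul]
    rw [Finset.sum_congr rfl (fun x _ => hin), Finset.sum_const, nsmul_eq_mul]
    rw [hGc, Finset.card_univ]
  have hW2 : 0 ≤ ∑ x : G, ∑ y : G, (if y ∉ H ∧ x ∈ H ∧ y⁻¹ * x * y ∈ H then
      Mr * (PhiR H φ R (x * y) * PhiR H φ R x * PhiR H φ R y) else 0) := by
    rw [Finset.sum_comm]
    apply Finset.sum_nonneg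
    intro y _
    exact W2_sum_nonneg H φ R hR2 hR3 hRH y
  have hW3 : 0 ≤ ∑ x : G, ∑ y : G, (if y ∉ H ∧ x ∉ H ∧ x⁻¹ * y ∈ H ∧ x * y ∈ H then
      Mr * (PhiR H φ R (x * y) * PhiR H φ R x * PhiR H φ R y) else 0) := by
    rw [Finset.sum_congr rfl (fun x (_ : x ∈ Finset.univ) => W3_inner H φ R hR2 hR3 hRH x)]
    have hpt : ∀ x : G, (if x ∉ H ∧ x * x ∈ H then
        ((Finset.univ.filter (· ∈ H)).card : ℝ) * (Mr * PhiE H φ (x * x)) else 0)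
        = ((Hf : ℝ) * Mr) * (if x ∉ H ∧ x * x ∈ H then PhiE H φ (x * x) else 0) := by
      intro x
      split_ifs
      · rw [← hHf]; ring
      · rw [mul_zero]
    rw [Finset.sum_congr rfl (fun x _ => hpt x), ← Finset.mul_sum]
    apply mul_nonneg (mul_nonneg (Nat.cast_nonneg _) (Nat.cast_nonneg _))
    exact V_core_nonneg H φ R T hTsq hR2 hR3 hRT
  -- choose a good ε₀
  have hsum_le : ∑ _ε : G → ℤˣ, ((Gc : ℝ) * (Hf : ℝ)) ≤ ∑ ε : G → ℤˣ, Stot ε := by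
    rw [Finset.sum_const, nsmul_eq_mul, hdecomp]
    have : (Fintype.card (G → ℤˣ) : ℝ) * ((Gc : ℝ) * (Hf : ℝ)) = (Gc : ℝ) * ((Hf : ℝ) * Mr) := by
      rw [hMr]; ring
    rw [Finset.card_univ, this]
    linarith [hW1, hW2, hW3]
  obtain ⟨ε₀, _, hS⟩ := Finset.exists_le_of_sum_le Finset.univ_nonempty hsum_le
  -- the function
  refine ⟨Ffun H φ R ε₀, ?_, ?_, ?_⟩
  · intro x
    unfold Ffun Efun
    by_cases hx : x ∈ H
    · rw [if_pos hx, one_mul]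
      exact PhiR_pm H φ R hR2 x
    · rw [if_neg hx]
      rcases Int.units_eq_one_or (ε₀ (R x)) with h | h <;>
        rcases PhiR_pm H φ R hR2 x with h2 | h2 <;> rw [h, h2] <;> norm_num
  · obtain ⟨h₀, hh₀⟩ := hφ (-1)
    have hneg : ∀ x : G, Ffun H φ R ε₀ (x * (h₀ : G)) = - Ffun H φ R ε₀ x := by
      intro x
      unfold Ffun
      have hE : Efun H R ε₀ (x * (h₀ : G)) = Efun H R ε₀ x := by
        unfold Efun
        by_cases hx : x ∈ H
        · rw [if_pos hx, if_pos (H.mul_mem hx h₀.2)]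
        · have hxh : x * (h₀ : G) ∉ H := by
            intro h
            apply hx
            have := H.mul_mem h (H.inv_mem h₀.2)
            rwa [mul_inv_cancel_right] at this
          rw [if_neg hx, if_neg hxh, hR3 x (h₀ : G) h₀.2]
      have hP : PhiR H φ R (x * (h₀ : G)) = - PhiR H φ R x := by
        rw [PhiR_mulH H φ R hR2 hR3 x (h₀ : G) h₀.2, PhiE_eq H φ h₀.2]
        have : (⟨(h₀ : G), h₀.2⟩ : ↥H) = h₀ := rfl
        rw [this, hh₀]
        norm_num
      rw [hE, hP]
      ring
    have hinv : ∑ x : G, Ffun H φ R ε₀ x = ∑ x : G, Ffun H φ R ε₀ (x * (h₀ : G)) :=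
      (Equiv.sum_comp (Equiv.mulRight (h₀ : G)) (Ffun H φ R ε₀)).symm
    have h2 : ∑ x : G, Ffun H φ R ε₀ (x * (h₀ : G)) = - ∑ x : G, Ffun H φ R ε₀ x := by
      rw [Finset.sum_congr rfl (fun x _ => hneg x), Finset.sum_neg_distrib]
    have := hinv.trans h2
    linarith
  · -- the counting bound
    have hpm : ∀ x : G, Ffun H φ R ε₀ x = 1 ∨ Ffun H φ R ε₀ x = -1 := by
      intro x
      unfold Ffun Efun
      by_cases hx : x ∈ H
      · rw [if_pos hx, one_mul]
        exact PhiR_pm H φ R hR2 x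
      · rw [if_neg hx]
        rcases Int.units_eq_one_or (ε₀ (R x)) with h | h <;>
          rcases PhiR_pm H φ R hR2 x with h2 | h2 <;> rw [h, h2] <;> norm_num
    have hcount : (Nat.card {p : G × G // Ffun H φ R ε₀ (p.1 * p.2) =
        Ffun H φ R ε₀ p.1 * Ffun H φ R ε₀ p.2} : ℝ)
        = ∑ p : G × G, (if Ffun H φ R ε₀ (p.1 * p.2) =
            Ffun H φ R ε₀ p.1 * Ffun H φ R ε₀ p.2 then (1 : ℝ) else 0) := by
      rw [Nat.card_eq_fintype_card, Fintype.card_subtype, Finset.card_filter]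
      push_cast
      apply Finset.sum_congr rfl
      intro p _
      split_ifs <;> norm_num
    have hhalf : ∀ p : G × G, (if Ffun H φ R ε₀ (p.1 * p.2) =
        Ffun H φ R ε₀ p.1 * Ffun H φ R ε₀ p.2 then (1 : ℝ) else 0)
        = (1 + Ffun H φ R ε₀ (p.1 * p.2) * Ffun H φ R ε₀ p.1 * Ffun H φ R ε₀ p.2) / 2 := by
      intro p
      rcases hpm (p.1 * p.2) with h1 | h1 <;> rcases hpm p.1 with h2 | h2 <;>
        rcases hpm p.2 with h3 | h3 <;> rw [h1, h2, h3] <;> norm_num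
    have hcount2 : (Nat.card {p : G × G // Ffun H φ R ε₀ (p.1 * p.2) =
        Ffun H φ R ε₀ p.1 * Ffun H φ R ε₀ p.2} : ℝ)
        = ((Gc : ℝ) ^ 2 + Stot ε₀) / 2 := by
      rw [hcount, Finset.sum_congr rfl (fun p _ => hhalf p), ← Finset.sum_div,
        Finset.sum_add_distrib, Finset.sum_const, Finset.card_univ, Fintype.card_prod,
        Fintype.sum_prod_type]
      have hSe : Stot ε₀ = ∑ x : G, ∑ y : G,
          Ffun H φ R ε₀ (x * y) * Ffun H φ R ε₀ x * Ffun H φ R ε₀ y := rfl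
      rw [hSe, nsmul_eq_mul]
      push_cast
      ring
    have hHfc : (Nat.card ↥H : ℝ) = (Hf : ℝ) := by
      rw [Nat.card_eq_fintype_card, hHf]
      norm_cast
      exact Fintype.card_subtype _
    have hGcc : (Nat.card G : ℝ) = (Gc : ℝ) := by
      rw [Nat.card_eq_fintype_card, hGc]
    have hGpos : (0 : ℝ) < (Gc : ℝ) := by
      rw [hGc]
      exact_mod_cast Fintype.card_pos
    rw [hcount2, hHfc, hGcc]
    have harith : (1 / 2 : ℝ) * (1 + (Hf : ℝ) / (Gc : ℝ)) * (Gc : ℝ) ^ 2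
        = ((Gc : ℝ) ^ 2 + (Gc : ℝ) * (Hf : ℝ)) / 2 := by
      field_simp
    rw [harith]
    linarith [hS]
end

section
/- Let G be a group, H ≤ G a finite subgroup, and c ∈ G with c ∉ N_G(H) (i.e., cHc⁻¹ ≠ H). Then |H ∩ cHc| ≤ |H|/2, where cHc = {c·h·c : h ∈ H}. -/
theorem card_inter_cHc_le_half {G : Type} [Group G] (H : Subgroup G)
    (hH : Finite H) (c : G) (hc : c ∉ Subgroup.normalizer (H : Set G)) :
    2 * ((H : Set G) ∩ (fun h => c * h * c) '' (H : Set G)).ncard ≤ Nat.card H := by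
  classical
  set K : Subgroup G := H ⊓ Subgroup.map (MulAut.conj c).toMonoidHom H with hK
  have hKleH : K ≤ H := inf_le_left
  have hHfin : (H : Set G).Finite := Set.toFinite _
  have hKfin : (K : Set G).Finite := hHfin.subset hKleH
  have hinj : Function.Injective (fun h : G => c * h * c⁻¹) := by
    intro a b hab
    simpa using hab
  have himg : (Subgroup.map (MulAut.conj c).toMonoidHom H : Set G)
      = (fun h : G => c * h * c⁻¹) '' (H : Set G) := by
    ext x
    simp [Subgroup.mem_map, MulAut.conj_apply]
  -- K ≠ H
  have hKne : K ≠ H := by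
    intro h
    apply hc
    rw [Subgroup.mem_normalizer_iff]
    have hsub : (H : Set G) ⊆ (Subgroup.map (MulAut.conj c).toMonoidHom H : Set G) := by
      intro x hx
      have : x ∈ K := h ▸ hx
      exact this.2
    have hcard : ((Subgroup.map (MulAut.conj c).toMonoidHom H : Set G)).ncard
        = (H : Set G).ncard := by
      rw [himg, Set.ncard_image_of_injective _ hinj]
    have heq : (H : Set G) = (Subgroup.map (MulAut.conj c).toMonoidHom H : Set G) :=
      Set.eq_of_subset_of_ncard_le hsub (le_of_eq hcard)
        (by rw [himg]; exact hHfin.image _)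
    intro x
    constructor
    · intro hx
      have : c * x * c⁻¹ ∈ (Subgroup.map (MulAut.conj c).toMonoidHom H : Set G) :=
        ⟨x, hx, by simp [MulAut.conj_apply]⟩
      rw [← heq] at this
      exact this
    · intro hx
      have : c * x * c⁻¹ ∈ (Subgroup.map (MulAut.conj c).toMonoidHom H : Set G) :=
        heq ▸ hx
      obtain ⟨a, ha, hae⟩ := this
      replace hae : c * a * c⁻¹ = c * x * c⁻¹ := hae
      have : a = x := hinj hae
      exact this ▸ ha
  -- 2 * Nat.card K ≤ Nat.card H
  have hdvd : Nat.card K ∣ Nat.card H := Subgroup.card_dvd_of_le hKleH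
  haveI : Finite K := hKfin.to_subtype
  have hKpos : 0 < Nat.card K := Nat.card_pos
  have hcardlt : Nat.card K < Nat.card H := by
    rcases lt_or_eq_of_le (Nat.card_mono hHfin ((SetLike.coe_subset_coe).2 hKleH)) with h | h
    · simpa [Nat.card_coe_set_eq] using h
    · exfalso
      apply hKne
      have : (K : Set G) = (H : Set G) := by
        apply Set.eq_of_subset_of_ncard_le ((SetLike.coe_subset_coe).2 hKleH) _ hHfin
        have h'' : (H : Set G).ncard = (K : Set G).ncard := by
          rw [← Nat.card_coe_set_eq, ← Nat.card_coe_set_eq]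
          exact h.symm
        exact h''.le
      exact SetLike.coe_injective this
  have h2K : 2 * Nat.card K ≤ Nat.card H := by
    obtain ⟨d, hd⟩ := hdvd
    have hd2 : 2 ≤ d := by
      by_contra hlt
      push_neg at hlt
      interval_cases d <;> omega
    calc 2 * Nat.card K ≤ d * Nat.card K := Nat.mul_le_mul_right _ hd2
      _ = Nat.card H := by rw [hd, Nat.mul_comm]
  -- Now S ⊆ coset of K
  set S : Set G := (H : Set G) ∩ (fun h => c * h * c) '' (H : Set G) with hS
  rcases Set.eq_empty_or_nonempty S with hSe | ⟨x, hx⟩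
  · simp [← hS, hSe]
  · have hSsub : S ⊆ (fun k => k * x) '' (K : Set G) := by
      rintro s ⟨hsH, a, haH, hae⟩
      obtain ⟨hxH, b, hbH, hbe⟩ := hx
      refine ⟨s * x⁻¹, ⟨H.mul_mem hsH (H.inv_mem hxH), ?_⟩, by group⟩
      refine ⟨a * b⁻¹, H.mul_mem haH (H.inv_mem hbH), ?_⟩
      show c * (a * b⁻¹) * c⁻¹ = s * x⁻¹
      have hae' : c * a * c = s := hae
      have hbe' : c * b * c = x := hbe
      rw [← hae', ← hbe']
      group
    have hle : S.ncard ≤ Nat.card K := by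
      calc S.ncard ≤ ((fun k => k * x) '' (K : Set G)).ncard :=
            Set.ncard_le_ncard hSsub (hKfin.image _)
        _ = (K : Set G).ncard :=
            Set.ncard_image_of_injective _ (mul_left_injective x)
        _ = Nat.card K := (Nat.card_coe_set_eq _).symm
    calc 2 * S.ncard ≤ 2 * Nat.card K := by omega
      _ ≤ Nat.card H := h2K
end

section
/- Let G be a group, H ≤ G a finite subgroup, and c ∈ G such that H ∩ cHc ≠ ∅, where cHc = {c·h·c : h ∈ H}. Then |H ∩ cHc| = |H ∩ cHc⁻¹|, where cHc⁻¹ = {c·h·c⁻¹ : h ∈ H}. -/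
theorem card_inter_cHc_eq_card_inter_cHcinv {G : Type} [Group G] (H : Subgroup G)
    (hH : Finite H) (c : G)
    (hne : ((H : Set G) ∩ (fun h => c * h * c) '' (H : Set G)).Nonempty) :
    ((H : Set G) ∩ (fun h => c * h * c) '' (H : Set G)).ncard =
      ((H : Set G) ∩ (fun h => c * h * c⁻¹) '' (H : Set G)).ncard := by
  obtain ⟨x, hxH, h₀, hh₀, hx⟩ := hne
  have hinj : Function.Injective (fun y : G => y * x⁻¹) :=
    fun a b h => by simpa using mul_right_cancel h
  have key : (fun y : G => y * x⁻¹) '' ((H : Set G) ∩ (fun h => c * h * c) '' (H : Set G)) =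
      (H : Set G) ∩ (fun h => c * h * c⁻¹) '' (H : Set G) := by
    ext z
    constructor
    · rintro ⟨y, ⟨hyH, h, hh, rfl⟩, rfl⟩
      refine ⟨H.mul_mem hyH (H.inv_mem hxH), h * h₀⁻¹, H.mul_mem hh (H.inv_mem hh₀), ?_⟩
      simp only
      rw [← hx]
      group
    · rintro ⟨hzH, h, hh, rfl⟩
      refine ⟨c * (h * h₀) * c, ⟨?_, ⟨h * h₀, H.mul_mem hh hh₀, rfl⟩⟩, ?_⟩
      · have : c * (h * h₀) * c = (c * h * c⁻¹) * x := by rw [← hx]; group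
        rw [this]
        exact H.mul_mem hzH hxH
      · simp only
        rw [← hx]
        group
  calc ((H : Set G) ∩ (fun h => c * h * c) '' (H : Set G)).ncard
      = ((fun y : G => y * x⁻¹) ''
          ((H : Set G) ∩ (fun h => c * h * c) '' (H : Set G))).ncard :=
        (Set.ncard_image_of_injective _ hinj).symm
    _ = _ := by rw [key]
end
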